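/- arXiv:math/9712287 — 4 statements merged into one kernel-verified Lean document; each statement's English description precedes it below -/
import Mathlib

section
/- If κ is a cardinal with ℵ₁ ≤ κ < 2^ℵ₀, then the set of injective functions from κ into [0,1] is of second category (i.e., non-meager) in the box product topology on the product of κ copies of [0,1]. -/
/-- The box product topology on `Π (ι) [0,1]`: generated by products of open sets. -/
def boxTopology (ι : Type*) : TopologicalSpace (ι → Set.Icc (0:ℝ) 1) :=
  TopologicalSpace.generateFrom
    {S | ∃ U : ι → Set (Set.Icc (0:ℝ) 1), (∀ i, IsOpen (U i)) ∧ S = Set.pi Set.univ U}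

namespace BoxProof

open List Set

/-- left endpoint of the dyadic interval coded by a list of bools (MSB first). -/
noncomputable def lo : List Bool → ℝ
  | [] => 0
  | b :: s => (cond b (1/2) 0) + lo s / 2

/-- length of the dyadic interval coded by a list of bools. -/
noncomputable def hl (s : List Bool) : ℝ := (2⁻¹ : ℝ) ^ s.length

lemma hl_pos (s : List Bool) : 0 < hl s := by
  have : (0:ℝ) < 2⁻¹ := by norm_num
  exact pow_pos this _

lemma hl_cons (b : Bool) (s : List Bool) : hl (b :: s) = hl s / 2 := by
  simp [hl, pow_succ]; ring

lemma hl_nil : hl ([] : List Bool) = 1 := by simp [hl]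

lemma hl_append (s t : List Bool) : hl (s ++ t) = hl s * hl t := by
  simp [hl, pow_add]

lemma lo_nonneg (s : List Bool) : 0 ≤ lo s := by
  induction s with
  | nil => simp [lo]
  | cons b s ih =>
    have : (0:ℝ) ≤ cond b (1/2) 0 := by cases b <;> norm_num
    simp only [lo]; linarith

lemma lo_add_hl_le_one (s : List Bool) : lo s + hl s ≤ 1 := by
  induction s with
  | nil => simp [lo, hl_nil]
  | cons b s ih =>
    have h2 : hl (b :: s) = hl s / 2 := hl_cons b s
    have : (cond b (1/2) 0 : ℝ) ≤ 1/2 := by cases b <;> norm_num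
    simp only [lo]; rw [h2]; linarith

lemma lo_append (s t : List Bool) : lo (s ++ t) = lo s + hl s * lo t := by
  induction s with
  | nil => simp [lo, hl_nil]
  | cons b s ih =>
    simp only [List.cons_append, lo, List.append_eq, ih, hl_cons]
    ring

/-- The (closed) dyadic interval of a path. -/
noncomputable def Iset (s : List Bool) : Set ℝ := Icc (lo s) (lo s + hl s)

/-- endpoints of middle half. -/
noncomputable def al (s : List Bool) : ℝ := lo s + hl s / 4
noncomputable def ar (s : List Bool) : ℝ := lo s + 3 / 4 * hl s

/-- The middle half of the dyadic interval of a path. -/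
noncomputable def Mset (s : List Bool) : Set ℝ := Icc (al s) (ar s)

lemma al_lt_ar (s : List Bool) : al s < ar s := by
  have := hl_pos s; unfold al ar; linarith

lemma Mset_nonempty (s : List Bool) : (Mset s).Nonempty :=
  ⟨al s, le_refl _, (al_lt_ar s).le⟩

lemma Mset_subset_Iset (s : List Bool) : Mset s ⊆ Iset s := by
  have := hl_pos s
  apply Icc_subset_Icc
  · unfold al; linarith
  · unfold ar; linarith

lemma Iset_subset_unit (s : List Bool) : Iset s ⊆ Icc 0 1 :=
  Icc_subset_Icc (lo_nonneg s) (lo_add_hl_le_one s)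

lemma prefix_Iset {s t : List Bool} (h : s <+: t) : Iset t ⊆ Iset s := by
  obtain ⟨u, rfl⟩ := h
  have h1 := lo_nonneg u
  have h2 := lo_add_hl_le_one u
  have h3 := hl_pos s
  have h4 := hl_pos u
  unfold Iset
  rw [lo_append, hl_append]
  apply Icc_subset_Icc
  · nlinarith
  · nlinarith

/-- Comparability of paths. -/
def Cmp (s t : List Bool) : Prop := s <+: t ∨ t <+: s

lemma Cmp.symm {s t : List Bool} (h : Cmp s t) : Cmp t s := h.elim Or.inr Or.inl

/-- Fork: incomparable lists have a common prefix followed by distinct bits. -/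
lemma fork {s t : List Bool} (h : ¬ Cmp s t) :
    ∃ (u s' t' : List Bool) (b : Bool),
      s = u ++ b :: s' ∧ t = u ++ (!b) :: t' := by
  induction s generalizing t with
  | nil => exact absurd (Or.inl (nil_prefix)) h
  | cons a s ih =>
    cases t with
    | nil => exact absurd (Or.inr (nil_prefix)) h
    | cons c t =>
      by_cases hac : a = c
      · subst hac
        have h' : ¬ Cmp s t := by
          intro hc
          exact h (hc.elim (fun hp => Or.inl (List.cons_prefix_cons.mpr ⟨rfl, hp⟩)) (fun hp => Or.inr (List.cons_prefix_cons.mpr ⟨rfl, hp⟩)))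
        obtain ⟨u, s', t', b, hs, ht⟩ := ih h'
        exact ⟨a :: u, s', t', b, by simp [hs], by simp [ht]⟩
      · refine ⟨[], s, t, a, by simp, ?_⟩
        have : c = !a := by cases a <;> cases c <;> simp_all
        simp [this]


/-- A block: m falses followed by one true. -/
def blk (m : ℕ) : List Bool := List.replicate m false ++ [true]

def code (m : ℕ) : List Bool := blk m ++ blk m

@[simp] lemma blk_length (m : ℕ) : (blk m).length = m + 1 := by simp [blk]

lemma ne_notCmp {X Y : List Bool} {i : ℕ} (hiX : i < X.length) (hiY : i < Y.length)
    (hne : X[i] ≠ Y[i]) : ¬ Cmp X Y := fun h =>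
  h.elim (fun hp => hne (hp.getElem hiX)) (fun hp => hne (hp.getElem hiY).symm)

lemma getElem_blk_append_self (m : ℕ) (u : List Bool) :
    (blk m ++ u)[m]'(by simp; omega) = true := by
  have h1 : m < (blk m).length := by simp
  rw [List.getElem_append_left h1]
  unfold blk
  have h2 : (List.replicate m false).length ≤ m := by simp
  show (List.replicate m false ++ [true])[m]'(by simp) = true
  rw [List.getElem_append_right h2]
  simp

lemma getElem_blk_append_lt {k m : ℕ} (h : k < m) (u : List Bool) :
    (blk m ++ u)[k]'(by simp; omega) = false := by
  have h1 : k < (blk m).length := by simp; omega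
  rw [List.getElem_append_left h1]
  unfold blk
  have h2 : k < (List.replicate m false).length := by simpa
  show (List.replicate m false ++ [true])[k]'(by simp; omega) = false
  rw [List.getElem_append_left h2]
  simp

lemma blk_head_eq_aux {a a' : ℕ} {u v : List Bool} (h : a < a') :
    ¬ Cmp (blk a ++ u) (blk a' ++ v) := by
  refine ne_notCmp (i := a) (by simp; omega) (by simp; omega) ?_
  rw [getElem_blk_append_self, getElem_blk_append_lt h]
  simp

lemma blk_head_eq {a a' : ℕ} {u v : List Bool} (h : Cmp (blk a ++ u) (blk a' ++ v)) :
    a = a' := by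
  rcases Nat.lt_trichotomy a a' with hlt | he | hgt
  · exact absurd h (blk_head_eq_aux hlt)
  · exact he
  · exact absurd h.symm (blk_head_eq_aux hgt)

lemma cmp_append_iff (P X Y : List Bool) : Cmp (P ++ X) (P ++ Y) ↔ Cmp X Y := by
  unfold Cmp
  rw [List.prefix_append_right_inj, List.prefix_append_right_inj]

/-- Decomposition: a list of bools is all-false or has a first true. -/
lemma false_run_decomp (γ : List Bool) :
    γ = List.replicate γ.length false ∨
    ∃ (p : ℕ) (γ' : List Bool), γ = List.replicate p false ++ true :: γ' := by
  induction γ with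
  | nil => left; simp
  | cons b γ ih =>
    cases b
    · rcases ih with h | ⟨p, γ', h⟩
      · left; rw [List.length_cons]; rw [List.replicate_succ]; rw [← h]
      · right; exact ⟨p + 1, γ', by rw [h, List.replicate_succ]; simp⟩
    · right; exact ⟨0, γ, by simp⟩

lemma rep_append_blk (c a : ℕ) :
    List.replicate c false ++ blk a = blk (c + a) := by
  unfold blk
  rw [List.replicate_add, List.append_assoc]


lemma getElem_mid (u : List Bool) (b : Bool) (w : List Bool) :
    (u ++ b :: w)[u.length]'(by simp) = b := by
  rw [List.getElem_append_right (le_refl u.length)]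
  simp

/-- Core combinatorial lemma, one-sided version. -/
lemma core_aux {γ : List Bool} {a a' : ℕ} (hne : a ≠ a')
    (h0 : Cmp (code a) (γ ++ code a'))
    (h1 : Cmp (code (a+1)) (γ ++ code (a'+1))) : False := by
  rcases false_run_decomp γ with h | ⟨p, γ', h⟩
  · set c := γ.length with hc
    rw [h] at h0
    -- γ ++ code a' = blk (c+a') ++ blk a'
    have e : List.replicate c false ++ code a' = blk (c + a') ++ blk a' := by
      unfold code
      rw [← List.append_assoc, rep_append_blk]
    rw [e] at h0
    unfold code at h0
    have hac : a = c + a' := blk_head_eq h0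
    subst hac
    rw [cmp_append_iff] at h0
    have : c + a' = a' := blk_head_eq (u := []) (v := []) (by simpa using h0)
    omega
  · subst h
    have e : ∀ x : ℕ, (List.replicate p false ++ true :: γ') ++ code x
        = blk p ++ (γ' ++ code x) := by
      intro x
      unfold blk
      simp
    rw [e] at h0 h1
    unfold code at h0 h1
    have ha : a = p := blk_head_eq h0
    have ha1 : a + 1 = p := blk_head_eq h1
    omega

/-- The core lemma: two slot-paths cannot be comparable for both children. -/
theorem core {P P' : List Bool} {a a' : ℕ} (hne : a ≠ a')
    (h0 : Cmp (P ++ code a) (P' ++ code a'))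
    (h1 : Cmp (P ++ code (a+1)) (P' ++ code (a'+1))) : False := by
  by_cases hPP : Cmp P P'
  · rcases hPP with ⟨γ, rfl⟩ | ⟨γ, rfl⟩
    · rw [List.append_assoc, cmp_append_iff] at h0 h1
      exact core_aux hne h0 h1
    · rw [List.append_assoc, cmp_append_iff] at h0 h1
      exact core_aux (Ne.symm hne) h0.symm h1.symm
  · obtain ⟨u, s', t', b, hs, ht⟩ := fork hPP
    subst hs; subst ht
    rw [List.append_assoc, List.cons_append] at h0
    rw [show ((u ++ (!b) :: t') ++ code a') = u ++ (!b) :: (t' ++ code a') by simp] at h0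
    refine absurd h0 (ne_notCmp (i := u.length) (by simp) (by simp) ?_)
    rw [getElem_mid, getElem_mid]
    simp



-- ## Disjointness of middle halves of incomparable dyadic intervals

lemma sup_bound (u s' : List Bool) :
    lo (u ++ false :: s') + hl (u ++ false :: s') ≤ lo u + hl u / 2 := by
  have h1 := lo_add_hl_le_one s'
  have h2 := hl_pos u
  have h3 := lo_nonneg s'
  have h4 := hl_pos s'
  rw [lo_append, hl_append]
  have e1 : lo (false :: s') = lo s' / 2 := by simp [lo]
  have e2 : hl (false :: s') = hl s' / 2 := hl_cons _ _
  rw [e1, e2]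
  nlinarith

lemma lo_bound_true (u t' : List Bool) :
    lo u + hl u / 2 ≤ lo (u ++ true :: t') := by
  have h2 := hl_pos u
  have h3 := lo_nonneg t'
  rw [lo_append]
  have e1 : lo (true :: t') = 1/2 + lo t' / 2 := by simp [lo]
  rw [e1]
  nlinarith

lemma Mdisj_aux (u s' t' : List Bool) {x : ℝ}
    (hx : x ∈ Mset (u ++ false :: s')) (hy : x ∈ Mset (u ++ true :: t')) : False := by
  obtain ⟨hx1, hx2⟩ := hx
  obtain ⟨hy1, hy2⟩ := hy
  have h1 := sup_bound u s'
  have h2 := lo_bound_true u t'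
  have h3 := hl_pos (u ++ false :: s')
  have h4 := hl_pos (u ++ true :: t')
  unfold al ar at *
  linarith

lemma notCmp_Mset_disjoint {s t : List Bool} (h : ¬ Cmp s t) {x : ℝ}
    (hx : x ∈ Mset s) (hy : x ∈ Mset t) : False := by
  obtain ⟨u, s', t', b, hs, ht⟩ := fork h
  subst hs; subst ht
  cases b
  · exact Mdisj_aux u s' t' hx hy
  · exact Mdisj_aux u t' s' hy hx

-- ## Dyadic interval inside an open set

def natPath : ℕ → ℕ → List Bool
  | 0, _ => []
  | n + 1, k => (decide (2^n ≤ k)) :: natPath n (k % 2^n)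

lemma natPath_spec : ∀ n k, k < 2^n →
    (natPath n k).length = n ∧ lo (natPath n k) = (k : ℝ) * (2⁻¹)^n := by
  intro n
  induction n with
  | zero => intro k hk; interval_cases k; simp [natPath, lo]
  | succ n ih =>
    intro k hk
    have h2n : (0:ℕ) < 2^n := Nat.pow_pos (by norm_num)
    have hr1 : (2:ℝ)^n * (2⁻¹:ℝ)^n = 1 := by
      rw [← mul_pow]; norm_num
    obtain ⟨l1, l2⟩ := ih (k % 2^n) (Nat.mod_lt _ h2n)
    by_cases hc : 2^n ≤ k
    · have hb : decide (2^n ≤ k) = true := by simp [hc]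
      have hmod : k % 2^n = k - 2^n := by
        rw [Nat.mod_eq_sub_mod hc, Nat.mod_eq_of_lt (by omega : k - 2^n < 2^n)]
      constructor
      · simp [natPath, l1]
      · show (cond (decide (2^n ≤ k)) (1/2 : ℝ) 0) + lo (natPath n (k % 2^n)) / 2 = _
        rw [hb, l2, hmod]
        have hcast : ((k - 2^n : ℕ) : ℝ) = (k : ℝ) - 2^n := by
          push_cast [Nat.cast_sub hc]; ring
        rw [hcast, pow_succ]
        show (1/2 : ℝ) + _ = _
        linear_combination (-(1/2) : ℝ) * hr1
    · have hb : decide (2^n ≤ k) = false := by simp [hc]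
      have hmod : k % 2^n = k := Nat.mod_eq_of_lt (by omega)
      constructor
      · simp [natPath, l1]
      · show (cond (decide (2^n ≤ k)) (1/2 : ℝ) 0) + lo (natPath n (k % 2^n)) / 2 = _
        rw [hb, l2, hmod, pow_succ]
        simp
        ring

lemma exists_path_in_open {R : Set ℝ} (hR : IsOpen R) {t : ℝ} (ht : t ∈ R)
    (h0 : 0 < t) (h1 : t < 1) : ∃ s : List Bool, Iset s ⊆ R := by
  obtain ⟨ε, hε, hball⟩ := Metric.isOpen_iff.1 hR t ht
  have hball' : Set.Ioo (t - ε) (t + ε) ⊆ R := by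
    rw [← Real.ball_eq_Ioo]; exact hball
  obtain ⟨n, hn⟩ : ∃ n : ℕ, (2⁻¹ : ℝ)^n < ε :=
    exists_pow_lt_of_lt_one hε (by norm_num)
  set q : ℝ := (2⁻¹ : ℝ)^n with hq
  have hqpos : 0 < q := pow_pos (by norm_num) n
  set k := Nat.floor (t * 2^n) with hkdef
  have h2npos : (0:ℝ) < 2^n := pow_pos (by norm_num) n
  have htn : 0 ≤ t * 2^n := le_of_lt (mul_pos h0 h2npos)
  have hfl : (k:ℝ) ≤ t * 2^n := Nat.floor_le htn
  have hfu : t * 2^n < (k:ℝ) + 1 := Nat.lt_floor_add_one _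
  have hklt : k < 2^n := by
    rw [hkdef]
    rw [Nat.floor_lt htn]
    push_cast
    nlinarith
  obtain ⟨hlen, hlo⟩ := natPath_spec n k hklt
  refine ⟨natPath n k, ?_⟩
  intro x hx
  obtain ⟨hx1, hx2⟩ := hx
  rw [hlo] at hx1
  have hhl : hl (natPath n k) = q := by rw [hl, hlen]
  rw [hlo, hhl] at hx2
  rw [← hq] at hx1 hx2
  have hq2 : (2:ℝ)^n * q = 1 := by
    rw [hq, ← mul_pow]; norm_num
  have e : t * 2^n * q = t := by rw [mul_assoc, hq2, mul_one]
  have hA : (k:ℝ) * q ≤ t := by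
    have h := mul_le_mul_of_nonneg_right hfl hqpos.le
    rwa [e] at h
  have hB : t < (k:ℝ) * q + q := by
    have h := mul_lt_mul_of_pos_right hfu hqpos
    rw [e] at h
    nlinarith
  apply hball'
  constructor
  · linarith
  · linarith



open Set

variable {ι : Type}

def gen (ι : Type) : Set (Set (ι → Set.Icc (0:ℝ) 1)) :=
  {S | ∃ U : ι → Set (Set.Icc (0:ℝ) 1), (∀ i, IsOpen (U i)) ∧ S = Set.pi Set.univ U}

lemma boxTopology_eq (ι : Type) : boxTopology ι = TopologicalSpace.generateFrom (gen ι) := rfl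

lemma box_basis {W : Set (ι → Set.Icc (0:ℝ) 1)}
    (hW : TopologicalSpace.GenerateOpen (gen ι) W)
    {x : ι → Set.Icc (0:ℝ) 1} (hx : x ∈ W) :
    ∃ U : ι → Set (Set.Icc (0:ℝ) 1), (∀ i, IsOpen (U i)) ∧ x ∈ Set.pi Set.univ U ∧
      Set.pi Set.univ U ⊆ W := by
  induction hW with
  | basic S hS =>
    obtain ⟨U, hU, rfl⟩ := hS
    exact ⟨U, hU, hx, subset_rfl⟩
  | univ => exact ⟨fun _ => univ, fun _ => isOpen_univ, by simp, by simp⟩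
  | inter s t hs ht ihs iht =>
    obtain ⟨U, hU, hxU, hUs⟩ := ihs hx.1
    obtain ⟨V, hV, hxV, hVt⟩ := iht hx.2
    refine ⟨fun i => U i ∩ V i, fun i => (hU i).inter (hV i), ?_, ?_⟩
    · intro i _
      exact ⟨hxU i (mem_univ i), hxV i (mem_univ i)⟩
    · intro z hz
      exact ⟨hUs fun i hi => (hz i hi).1, hVt fun i hi => (hz i hi).2⟩
  | sUnion S hS ih =>
    obtain ⟨s, hsS, hxs⟩ := hx
    obtain ⟨U, hU, hxU, hUs⟩ := ih s hsS hxs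
    exact ⟨U, hU, hxU, hUs.trans (subset_sUnion_of_mem hsS)⟩

lemma pi_proj {α : Type} [DecidableEq ι] {V O' : ι → Set α} {y : ι → α} (hy : y ∈ pi univ V)
    (h : pi univ V ⊆ pi univ O') (i : ι) : V i ⊆ O' i := by
  intro v hv
  have hup : Function.update y i v ∈ pi univ V := by
    intro j _
    rcases eq_or_ne j i with rfl | hne
    · simpa using hv
    · simpa [Function.update_of_ne hne] using hy j (mem_univ j)
  have := h hup i (mem_univ i)
  simpa using this



lemma step (p : ι → List Bool) {U : Set (ι → Set.Icc (0:ℝ) 1)}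
    (hUo : TopologicalSpace.GenerateOpen (gen ι) U)
    (hUd : @Dense _ (boxTopology ι) U) :
    ∃ D : ι → List Bool,
      (∀ i, Iset (D i) ⊆ Ioo (al (p i)) (ar (p i))) ∧
      (∀ x : ι → Set.Icc (0:ℝ) 1, (∀ i, (x i : ℝ) ∈ Iset (D i)) → x ∈ U) := by
  classical
  letI := boxTopology ι
  set Ofac : ι → Set (Set.Icc (0:ℝ) 1) :=
    fun i => (fun x : Set.Icc (0:ℝ) 1 => (x : ℝ)) ⁻¹' Ioo (al (p i)) (ar (p i)) with hOfac
  have hOfacOpen : ∀ i, IsOpen (Ofac i) :=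
    fun i => (isOpen_Ioo).preimage continuous_subtype_val
  have hOopen : TopologicalSpace.GenerateOpen (gen ι) (pi univ Ofac) :=
    TopologicalSpace.GenerateOpen.basic _ ⟨Ofac, hOfacOpen, rfl⟩
  have hONon : (pi univ Ofac).Nonempty := by
    have hmid : ∀ s : List Bool, lo s + hl s / 2 ∈ Icc (0:ℝ) 1 := by
      intro s
      have h1 := lo_nonneg s; have h2 := lo_add_hl_le_one s; have h3 := hl_pos s
      exact ⟨by linarith, by linarith⟩
    refine ⟨fun i => ⟨lo (p i) + hl (p i) / 2, hmid (p i)⟩, ?_⟩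
    intro i _
    have h3 := hl_pos (p i)
    simp only [hOfac, mem_preimage, mem_Ioo]
    constructor
    · show al (p i) < lo (p i) + hl (p i) / 2
      unfold al; linarith
    · show lo (p i) + hl (p i) / 2 < ar (p i)
      unfold ar; linarith
  obtain ⟨y, hyU, hyO⟩ := hUd.exists_mem_open (show IsOpen (pi univ Ofac) from hOopen) hONon
  have hW : TopologicalSpace.GenerateOpen (gen ι) (U ∩ pi univ Ofac) :=
    TopologicalSpace.GenerateOpen.inter _ _ hUo hOopen
  obtain ⟨V, hVopen, hyV, hVsub⟩ := box_basis hW ⟨hyU, hyO⟩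
  have hVO : ∀ i, V i ⊆ Ofac i :=
    pi_proj hyV (fun z hz => (hVsub hz).2)
  choose G hGopen hGeq using fun i => isOpen_induced_iff.1 (hVopen i)
  set R : ι → Set ℝ := fun i => G i ∩ Ioo (al (p i)) (ar (p i)) with hR
  have hRopen : ∀ i, IsOpen (R i) := fun i => (hGopen i).inter isOpen_Ioo
  have hyR : ∀ i, (y i : ℝ) ∈ R i := by
    intro i
    constructor
    · have h : y i ∈ V i := hyV i (mem_univ i)
      rw [← hGeq i] at h; exact h
    · exact hVO i (hyV i (mem_univ i))
  have hy0 : ∀ i, 0 < (y i : ℝ) ∧ (y i : ℝ) < 1 := by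
    intro i
    obtain ⟨ha, hb⟩ := (hyR i).2
    have h1 := lo_nonneg (p i); have h2 := lo_add_hl_le_one (p i); have h3 := hl_pos (p i)
    unfold al at ha; unfold ar at hb
    exact ⟨by linarith, by linarith⟩
  choose D hD using fun i => exists_path_in_open (hRopen i) (hyR i) (hy0 i).1 (hy0 i).2
  refine ⟨D, ?_, ?_⟩
  · intro i
    exact (hD i).trans inter_subset_right
  · intro x hx
    have hxV : x ∈ pi univ V := by
      intro i _
      have h : (x i : ℝ) ∈ G i := (hD i (hx i)).1
      rw [← hGeq i]; exact h
    exact (hVsub hxV).1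


-- ## Digit functions

def dig (e : ι → ℕ → Bool) (i : ι) (n : ℕ) : ℕ :=
  Encodable.encode (List.ofFn (fun m : Fin (n + 1) => e i m))

lemma dig_ne {e : ι → ℕ → Bool} {i j : ι} {m n : ℕ} (hmn : m ≤ n)
    (hne : e i m ≠ e j m) : dig e i n ≠ dig e j n := by
  intro h
  apply hne
  have hl := Encodable.encode_injective h
  have := congrArg (fun l : List Bool => fun k : ℕ => l[k]?) hl
  have h2 : (fun mm : Fin (n+1) => e i mm) = (fun mm : Fin (n+1) => e j mm) :=
    List.ofFn_injective hl
  exact congrFun h2 ⟨m, by omega⟩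

section Construction

variable (e : ι → ℕ → Bool) (U : ℕ → Set (ι → Set.Icc (0:ℝ) 1))
  (hUo : ∀ n, TopologicalSpace.GenerateOpen (gen ι) (U n))
  (hUd : ∀ n, @Dense _ (boxTopology ι) (U n))

/-- The path system: at each node of the binary tree, a path for each coordinate. -/
noncomputable def nodeD : (n : ℕ) → (Fin n → Bool) → ι → List Bool
  | 0 => fun _ _ => []
  | n + 1 => fun z i =>
      (Classical.choose (step (nodeD n (fun m => z m.castSucc)) (hUo n) (hUd n))) i
        ++ code (2 * dig e i n + cond (z (Fin.last n)) 1 0)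

lemma nodeD_succ (n : ℕ) (z : Fin (n+1) → Bool) (i : ι) :
    nodeD e U hUo hUd (n+1) z i =
      (Classical.choose (step (nodeD e U hUo hUd n (fun m => z m.castSucc)) (hUo n) (hUd n))) i
        ++ code (2 * dig e i n + cond (z (Fin.last n)) 1 0) := rfl

/-- restriction of an infinite branch. -/
def restr (z : ℕ → Bool) (n : ℕ) : Fin n → Bool := fun m => z m

lemma restr_front (z : ℕ → Bool) (n : ℕ) :
    (fun m : Fin n => restr z (n+1) m.castSucc) = restr z n := by
  funext m
  simp [restr]

lemma nodeD_restr_succ (z : ℕ → Bool) (n : ℕ) (i : ι) :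
    nodeD e U hUo hUd (n+1) (restr z (n+1)) i =
      (Classical.choose (step (nodeD e U hUo hUd n (restr z n)) (hUo n) (hUd n))) i
        ++ code (2 * dig e i n + cond (z n) 1 0) := by
  rw [nodeD_succ, restr_front]
  rfl

/-- The chain of middle-half intervals along a branch. -/
noncomputable def Jn (z : ℕ → Bool) (n : ℕ) (i : ι) : Set ℝ :=
  Mset (nodeD e U hUo hUd n (restr z n) i)

lemma Jn_succ_subset_Iset_choose (z : ℕ → Bool) (n : ℕ) (i : ι) :
    Jn e U hUo hUd z (n+1) i ⊆
      Iset ((Classical.choose (step (nodeD e U hUo hUd n (restr z n)) (hUo n) (hUd n))) i) := by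
  rw [Jn, nodeD_restr_succ]
  refine (Mset_subset_Iset _).trans (prefix_Iset ⟨_, rfl⟩)

lemma Jn_nested (z : ℕ → Bool) (n : ℕ) (i : ι) :
    Jn e U hUo hUd z (n+1) i ⊆ Jn e U hUo hUd z n i := by
  have hspec := Classical.choose_spec
    (step (nodeD e U hUo hUd n (restr z n)) (hUo n) (hUd n))
  refine (Jn_succ_subset_Iset_choose e U hUo hUd z n i).trans ?_
  refine (hspec.1 i).trans ?_
  rw [Jn, Mset]
  exact Ioo_subset_Icc_self

lemma Jn_mem_U (z : ℕ → Bool) (n : ℕ) (x : ι → Set.Icc (0:ℝ) 1)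
    (hx : ∀ i, (x i : ℝ) ∈ Jn e U hUo hUd z (n+1) i) : x ∈ U n := by
  have hspec := Classical.choose_spec
    (step (nodeD e U hUo hUd n (restr z n)) (hUo n) (hUd n))
  exact hspec.2 x (fun i => Jn_succ_subset_Iset_choose e U hUo hUd z n i (hx i))

/-- The bad set for a pair of coordinates. -/
def BadSet (i j : ι) : Set (ℕ → Bool) :=
  {z | ∀ n : ℕ, (Jn e U hUo hUd z (n+1) i ∩ Jn e U hUo hUd z (n+1) j).Nonempty}

lemma restr_succ_eq {z w : ℕ → Bool} {n : ℕ} (h : restr z n = restr w n)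
    (hn : z n = w n) : restr z (n+1) = restr w (n+1) := by
  funext m
  rcases Nat.lt_or_ge (m : ℕ) n with hm | hm
  · have := congrFun h ⟨m, hm⟩
    simpa [restr] using this
  · have hmn : (m : ℕ) = n := by omega
    simp [restr, hmn, hn]

lemma bad_inj {i j : ι} {m : ℕ} (hdig : ∀ n, m ≤ n → dig e i n ≠ dig e j n)
    {z w : ℕ → Bool} (hz : z ∈ BadSet e U hUo hUd i j) (hw : w ∈ BadSet e U hUo hUd i j)
    (hzw : restr z m = restr w m) : z = w := by
  -- prove by strong induction that restr z n = restr w n for all n ≥ m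
  have key : ∀ n, m ≤ n → restr z n = restr w n ∧ z n = w n := by
    intro n hn
    induction n using Nat.strong_induction_on with
    | _ n ih =>
      have hres : restr z n = restr w n := by
        rcases Nat.eq_or_lt_of_le hn with rfl | hlt
        · exact hzw
        · have hprev := ih (n-1) (by omega) (by omega)
          have : n - 1 + 1 = n := by omega
          rw [← this]
          exact restr_succ_eq hprev.1 hprev.2
      refine ⟨hres, ?_⟩
      -- use the core lemma
      by_contra hzwn
      have hz' := hz n
      have hw' := hw n
      rw [Jn, Jn, nodeD_restr_succ, nodeD_restr_succ] at hz' hw'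
      rw [hres] at hz'
      set P := (Classical.choose (step (nodeD e U hUo hUd n (restr w n)) (hUo n) (hUd n))) i
        with hP
      set P' := (Classical.choose (step (nodeD e U hUo hUd n (restr w n)) (hUo n) (hUd n))) j
        with hP'
      obtain ⟨x1, hx1, hx1'⟩ := hz'
      obtain ⟨x2, hx2, hx2'⟩ := hw'
      have c1 : Cmp (P ++ code (2 * dig e i n + cond (z n) 1 0))
          (P' ++ code (2 * dig e j n + cond (z n) 1 0)) := by
        by_contra hc
        exact notCmp_Mset_disjoint hc hx1 hx1'
      have c2 : Cmp (P ++ code (2 * dig e i n + cond (w n) 1 0))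
          (P' ++ code (2 * dig e j n + cond (w n) 1 0)) := by
        by_contra hc
        exact notCmp_Mset_disjoint hc hx2 hx2'
      have hdd : 2 * dig e i n ≠ 2 * dig e j n := by
        have := hdig n hn
        omega
      -- z n ≠ w n so one of them is false and the other true
      rcases Bool.eq_false_or_eq_true (z n) with hzn | hzn <;>
        rcases Bool.eq_false_or_eq_true (w n) with hwn | hwn
      · rw [hzn, hwn] at hzwn; exact hzwn rfl
      · rw [hzn] at c1; rw [hwn] at c2
        exact core hdd (by simpa using c2) (by simpa using c1)
      · rw [hzn] at c1; rw [hwn] at c2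
        exact core hdd (by simpa using c1) (by simpa using c2)
      · rw [hzn, hwn] at hzwn; exact hzwn rfl
  funext n
  rcases Nat.lt_or_ge n m with hn | hn
  · have := congrFun hzw ⟨n, hn⟩
    simpa [restr] using this
  · exact (key n hn).2

end Construction


-- ## Main existence theorem

theorem main_exists {ι : Type} (hcard : Cardinal.mk ι < Cardinal.continuum)
    (U : ℕ → Set (ι → Set.Icc (0:ℝ) 1))
    (hUo : ∀ n, TopologicalSpace.GenerateOpen (gen ι) (U n))
    (hUd : ∀ n, @Dense _ (boxTopology ι) (U n)) :
    ∃ x : ι → Set.Icc (0:ℝ) 1, Function.Injective x ∧ ∀ n, x ∈ U n := by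
  classical
  -- an injection from ι into ℕ → Bool
  have hmkNB : Cardinal.mk (ℕ → Bool) = Cardinal.continuum := by
    rw [← Cardinal.power_def, Cardinal.mk_bool, Cardinal.mk_nat, Cardinal.two_power_aleph0]
  have hle : Cardinal.mk ι ≤ Cardinal.mk (ℕ → Bool) := by
    rw [hmkNB]; exact hcard.le
  obtain ⟨einj⟩ := (Cardinal.le_def ι (ℕ → Bool)).1 hle
  set e : ι → ℕ → Bool := fun i => einj i with he
  -- the bad sets
  set Bad : ι × ι → Set (ℕ → Bool) :=
    fun q => if q.1 = q.2 then ∅ else BadSet e U hUo hUd q.1 q.2 with hBad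
  have hBadCount : ∀ q, Cardinal.mk (Bad q) ≤ Cardinal.aleph0 := by
    intro ⟨i, j⟩
    by_cases hij : i = j
    · simp [hBad, hij]
    · have hexm : ∃ m, e i m ≠ e j m := by
        by_contra hcon
        push_neg at hcon
        exact hij (einj.injective (funext hcon))
      set m := Nat.find hexm with hm
      have hdig : ∀ n, m ≤ n → dig e i n ≠ dig e j n :=
        fun n hn => dig_ne hn (Nat.find_spec hexm)
      have hinj : Function.Injective
          (fun z : Bad (i, j) => restr (z : ℕ → Bool) m) := by
        intro z w hzw
        have hz : (z : ℕ → Bool) ∈ BadSet e U hUo hUd i j := by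
          have := z.2; simpa [hBad, hij] using this
        have hw : (w : ℕ → Bool) ∈ BadSet e U hUo hUd i j := by
          have := w.2; simpa [hBad, hij] using this
        exact Subtype.ext (bad_inj e U hUo hUd hdig hz hw hzw)
      calc Cardinal.mk (Bad (i, j)) ≤ Cardinal.mk (Fin m → Bool) :=
            Cardinal.mk_le_of_injective hinj
        _ ≤ Cardinal.aleph0 := Cardinal.mk_le_aleph0
  -- the union of the bad sets is small
  have hUnion : Cardinal.mk (⋃ q : ι × ι, Bad q) < Cardinal.continuum := by
    refine lt_of_le_of_lt (Cardinal.mk_iUnion_le Bad) ?_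
    have hsup : (⨆ q : ι × ι, Cardinal.mk (Bad q)) ≤ Cardinal.aleph0 := by
      rcases isEmpty_or_nonempty (ι × ι) with hemp | hne
      · simp [ciSup_of_empty]
      · exact ciSup_le' hBadCount
    have hprod : Cardinal.mk (ι × ι) < Cardinal.continuum := by
      rw [Cardinal.mk_prod]
      simp only [Cardinal.lift_id]
      exact Cardinal.mul_lt_of_lt Cardinal.aleph0_le_continuum hcard hcard
    calc Cardinal.mk (ι × ι) * (⨆ q : ι × ι, Cardinal.mk (Bad q))
        ≤ Cardinal.mk (ι × ι) * Cardinal.aleph0 :=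
          mul_le_mul_right hsup _
      _ < Cardinal.continuum :=
          Cardinal.mul_lt_of_lt Cardinal.aleph0_le_continuum hprod
            Cardinal.aleph0_lt_continuum
  -- pick a good branch
  have hzex : ∃ z : ℕ → Bool, z ∉ ⋃ q : ι × ι, Bad q := by
    by_contra hcon
    push_neg at hcon
    have : (Set.univ : Set (ℕ → Bool)) ⊆ ⋃ q : ι × ι, Bad q := fun z _ => hcon z
    have hge := Cardinal.mk_le_mk_of_subset this
    rw [Cardinal.mk_univ, hmkNB] at hge
    exact absurd (hge.trans_lt hUnion) (lt_irrefl _)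
  obtain ⟨z, hz⟩ := hzex
  -- the decreasing chains of compact intervals
  have hchain : ∀ i : ι, ∃ v : ℝ, ∀ n, v ∈ Jn e U hUo hUd z n i := by
    intro i
    have hne := IsCompact.nonempty_iInter_of_sequence_nonempty_isCompact_isClosed
      (fun n => Jn e U hUo hUd z n i) (fun n => Jn_nested e U hUo hUd z n i)
      (fun n => Mset_nonempty _) isCompact_Icc (fun n => isClosed_Icc)
    obtain ⟨v, hv⟩ := hne
    exact ⟨v, fun n => by exact Set.mem_iInter.1 hv n⟩
  choose v hv using hchain
  have hv01 : ∀ i, v i ∈ Set.Icc (0:ℝ) 1 := by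
    intro i
    exact Iset_subset_unit _ (Mset_subset_Iset _ (hv i 0))
  set x : ι → Set.Icc (0:ℝ) 1 := fun i => ⟨v i, hv01 i⟩ with hx
  refine ⟨x, ?_, ?_⟩
  · -- injectivity
    intro i j hij
    by_contra hne
    have hzq : z ∉ Bad (i, j) := fun hmem => hz (Set.mem_iUnion.2 ⟨(i, j), hmem⟩)
    have : z ∈ Bad (i, j) := by
      rw [hBad]
      simp only [if_neg hne]
      intro n
      refine ⟨v i, hv i (n+1), ?_⟩
      have : v i = v j := by
        have := congrArg (fun a : Set.Icc (0:ℝ) 1 => (a : ℝ)) hij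
        simpa [hx] using this
      rw [this]
      exact hv j (n+1)
    exact hzq this
  · -- membership in all the open sets
    intro n
    exact Jn_mem_U e U hUo hUd z n x (fun i => hv i (n+1))


end BoxProof

/-- If `ℵ₁ ≤ κ < 2^ℵ₀`, the set of injective functions from `κ` into `[0,1]` is
of second category (non-meager) in the box product topology. -/
theorem stmt0 {ι : Type} (h1 : Cardinal.aleph 1 ≤ Cardinal.mk ι)
    (h2 : Cardinal.mk ι < Cardinal.continuum) :
    ¬ @IsMeagre _ (boxTopology ι)
        {x : ι → Set.Icc (0:ℝ) 1 | Function.Injective x} := by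
  intro hM
  letI := boxTopology ι
  have hM' : {x : ι → Set.Icc (0:ℝ) 1 | Function.Injective x}ᶜ ∈
      residual (ι → Set.Icc (0:ℝ) 1) := hM
  rw [mem_residual_iff] at hM'
  obtain ⟨S, hSo, hSd, hSc, hSsub⟩ := hM'
  have hcnt : (insert Set.univ S).Countable := hSc.insert _
  obtain ⟨f, hf⟩ := hcnt.exists_eq_range ⟨Set.univ, Set.mem_insert _ _⟩
  have hmemf : ∀ n, f n ∈ insert Set.univ S := by
    intro n
    rw [hf]
    exact Set.mem_range_self n
  have hfo : ∀ n, TopologicalSpace.GenerateOpen (BoxProof.gen ι) (f n) := by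
    intro n
    rcases hmemf n with h | h
    · rw [h]; exact TopologicalSpace.GenerateOpen.univ
    · exact hSo _ h
  have hfd : ∀ n, @Dense _ (boxTopology ι) (f n) := by
    intro n
    rcases hmemf n with h | h
    · rw [h]; exact dense_univ
    · exact hSd _ h
  obtain ⟨x, hxinj, hxmem⟩ := BoxProof.main_exists h2 f hfo hfd
  have hxS : x ∈ ⋂₀ S := by
    intro t ht
    have : t ∈ insert Set.univ S := Set.mem_insert_of_mem _ ht
    rw [hf] at this
    obtain ⟨n, rfl⟩ := this
    exact hxmem n
  exact (hSsub hxS) hxinj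
end

section
/- If κ is a cardinal with ℵ₁ ≤ κ < 2^ℵ₀ and {G_n : n < ω} is a countable family of dense open subsets of the box product Π_{ι<κ}[0,1], then there is an injective function x : κ → [0,1] belonging to ⋂_n G_n. -/
noncomputable section
namespace BoxAux
open Set

/-- value of a binary string, most significant digit first -/
def lval : List Bool → ℝ
  | [] => 0
  | a :: t => ((if a then (1:ℝ) else 0) + lval t) / 2

/-- the open dyadic interval with address `u` -/
def cell (u : List Bool) : Set ℝ := Set.Ioo (lval u) (lval u + (2⁻¹) ^ u.length)

lemma lval_nonneg (u : List Bool) : 0 ≤ lval u := by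
  induction u with
  | nil => simp [lval]
  | cons a t ih =>
      have : (0:ℝ) ≤ if a then (1:ℝ) else 0 := by split <;> norm_num
      simp only [lval]; linarith

lemma lval_add_le_one (u : List Bool) : lval u + (2⁻¹:ℝ) ^ u.length ≤ 1 := by
  induction u with
  | nil => simp [lval]
  | cons a t ih =>
      have : (if a then (1:ℝ) else 0) ≤ 1 := by split <;> norm_num
      simp only [lval, List.length_cons, pow_succ]
      linarith

lemma lval_append (u v : List Bool) :
    lval (u ++ v) = lval u + (2⁻¹:ℝ) ^ u.length * lval v := by
  induction u with
  | nil => simp [lval]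
  | cons a t ih =>
      show ((if a then (1:ℝ) else 0) + lval (t ++ v)) / 2 = _
      rw [ih]
      simp only [lval, List.length_cons, pow_succ]
      ring

lemma cell_append_subset (u v : List Bool) : cell (u ++ v) ⊆ cell u := by
  have hp : (0:ℝ) < (2⁻¹:ℝ) ^ u.length := by positivity
  apply Set.Ioo_subset_Ioo
  · rw [lval_append]
    nlinarith [lval_nonneg v]
  · rw [lval_append, List.length_append, pow_add]
    nlinarith [lval_add_le_one v]

lemma cell_subset_of_prefix {u w : List Bool} (h : u <+: w) : cell w ⊆ cell u := by
  obtain ⟨v, rfl⟩ := h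
  exact cell_append_subset u v

lemma cell_subset_Ioo (u : List Bool) : cell u ⊆ Set.Ioo (0:ℝ) 1 := by
  apply Set.Ioo_subset_Ioo (lval_nonneg u)
  exact lval_add_le_one u

lemma cell_nonempty (u : List Bool) : (cell u).Nonempty := by
  refine ⟨lval u + (2⁻¹:ℝ) ^ (u.length + 1), ?_, ?_⟩
  · have : (0:ℝ) < (2⁻¹:ℝ) ^ (u.length + 1) := by positivity
    linarith
  · have : ((2:ℝ)⁻¹) ^ (u.length + 1) < (2⁻¹:ℝ) ^ u.length := by
      apply pow_lt_pow_right_of_lt_one₀ <;> norm_num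
    linarith

lemma closure_cell (u : List Bool) :
    closure (cell u) = Set.Icc (lval u) (lval u + (2⁻¹:ℝ) ^ u.length) := by
  apply closure_Ioo
  have : (0:ℝ) < (2⁻¹:ℝ) ^ u.length := by positivity
  linarith

lemma mem_cell_cons {x : ℝ} {a : Bool} {t : List Bool} :
    x ∈ cell (a :: t) ↔ 2 * x - (if a then (1:ℝ) else 0) ∈ cell t := by
  simp only [cell, Set.mem_Ioo, lval, List.length_cons, pow_succ]
  constructor
  · rintro ⟨h1, h2⟩; constructor <;> linarith
  · rintro ⟨h1, h2⟩; constructor <;> linarith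

lemma cell_disjoint : ∀ {u v : List Bool}, u.length = v.length → u ≠ v →
    ∀ {x : ℝ}, x ∈ cell u → x ∈ cell v → False := by
  intro u
  induction u with
  | nil =>
      intro v h hne
      cases v with
      | nil => exact absurd rfl hne
      | cons b t => simp at h
  | cons a t ih =>
      intro v h hne x hx hy
      cases v with
      | nil => simp at h
      | cons b t' =>
          simp only [List.length_cons, Nat.succ.injEq] at h
          by_cases hab : a = b
          · subst hab
            have ht : t ≠ t' := fun he => hne (by rw [he])
            exact ih h ht (mem_cell_cons.1 hx) (mem_cell_cons.1 hy)
          · -- different heads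
            have hx' := mem_cell_cons.1 hx
            have hy' := mem_cell_cons.1 hy
            have hxI := cell_subset_Ioo _ hx'
            have hyI := cell_subset_Ioo _ hy'
            rcases Bool.eq_false_or_eq_true a with ha | ha <;>
              rcases Bool.eq_false_or_eq_true b with hb | hb <;>
                subst ha <;> subst hb <;> simp_all <;> linarith [hxI.1, hxI.2, hyI.1, hyI.2]

lemma comparable_of_mem_cell : ∀ {u v : List Bool} {x : ℝ},
    x ∈ cell u → x ∈ cell v → u <+: v ∨ v <+: u := by
  have aux : ∀ {u v : List Bool} {x : ℝ}, u.length ≤ v.length →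
      x ∈ cell u → x ∈ cell v → u <+: v := by
    intro u v x hle hu hv
    have hvtake : x ∈ cell (v.take u.length) := by
      have : cell v ⊆ cell (v.take u.length) :=
        cell_subset_of_prefix (List.take_prefix _ _)
      exact this hv
    have hlen : (v.take u.length).length = u.length := by
      simp [List.length_take, Nat.min_eq_left hle]
    have : u = v.take u.length := by
      by_contra hne
      exact cell_disjoint hlen.symm hne hu hvtake
    rw [this]
    exact List.take_prefix _ _
  intro u v x hu hv
  rcases le_total u.length v.length with h | h
  · exact Or.inl (aux h hu hv)
  · exact Or.inr (aux h hv hu)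


lemma exists_lval : ∀ (m N : ℕ), N < 2 ^ m →
    ∃ u : List Bool, u.length = m ∧ lval u = (N : ℝ) / 2 ^ m := by
  intro m
  induction m with
  | zero =>
      intro N hN
      interval_cases N
      exact ⟨[], rfl, by simp [lval]⟩
  | succ m ih =>
      intro N hN
      by_cases h : N < 2 ^ m
      · obtain ⟨u, hlen, hval⟩ := ih N h
        refine ⟨false :: u, by simp [hlen], ?_⟩
        simp only [lval, hval, pow_succ]
        push_cast
        field_simp
        ring
      · push_neg at h
        obtain ⟨u, hlen, hval⟩ := ih (N - 2 ^ m) (by omega)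
        refine ⟨true :: u, by simp [hlen], ?_⟩
        simp only [lval, hval, pow_succ]
        have hc : ((N - 2 ^ m : ℕ) : ℝ) = (N : ℝ) - 2 ^ m := by
          push_cast [Nat.cast_sub h]
          ring
        rw [hc]
        have h2 : ((2:ℝ) ^ m) ≠ 0 := by positivity
        field_simp
        simp only [if_true, one_mul]
        ring

lemma exists_cell_closure_subset {V : Set ℝ} (hV : IsOpen V) {x : ℝ}
    (hx : x ∈ V) (hx01 : x ∈ Set.Ioo (0:ℝ) 1) :
    ∃ u : List Bool, closure (cell u) ⊆ V := by
  obtain ⟨ε, hε, hball⟩ := Metric.isOpen_iff.1 hV x hx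
  obtain ⟨m, hm⟩ := exists_pow_lt_of_lt_one hε (by norm_num : (2⁻¹:ℝ) < 1)
  set N : ℕ := ⌊x * 2 ^ m⌋₊ with hN
  have hx0 : (0:ℝ) < x := hx01.1
  have hx1 : x < 1 := hx01.2
  have h2m : (0:ℝ) < 2 ^ m := by positivity
  have hNlt : N < 2 ^ m := by
    rw [hN]
    apply (Nat.floor_lt (by positivity)).2
    push_cast
    nlinarith
  obtain ⟨u, hlen, hval⟩ := exists_lval m N hNlt
  refine ⟨u, ?_⟩
  rw [closure_cell, hlen]
  have hfl : lval u ≤ x := by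
    rw [hval]
    rw [div_le_iff₀ h2m, hN]
    exact Nat.floor_le (by positivity)
  have hfu : x - (2⁻¹:ℝ) ^ m < lval u := by
    rw [hval]
    have := Nat.lt_floor_add_one (x * 2 ^ m)
    rw [sub_lt_iff_lt_add, div_add' _ _ _ (ne_of_gt h2m)]
    rw [lt_div_iff₀ h2m]
    have h2i : (2⁻¹:ℝ) ^ m * 2 ^ m = 1 := by
      rw [inv_pow]
      field_simp
    nlinarith
  have hsub : Set.Icc (lval u) (lval u + (2⁻¹:ℝ) ^ m) ⊆ Metric.ball x ε := by
    rw [Real.ball_eq_Ioo]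
    apply Set.Icc_subset_Ioo
    · calc x - ε < x - (2⁻¹:ℝ)^m := by linarith
        _ < lval u := hfu
    · calc lval u + (2⁻¹:ℝ) ^ m ≤ x + (2⁻¹:ℝ)^m := by linarith
        _ < x + ε := by linarith
  exact hsub.trans hball


def toI (S : Set ℝ) : Set (Set.Icc (0:ℝ) 1) := Subtype.val ⁻¹' S

lemma toI_open {S : Set ℝ} (h : IsOpen S) : IsOpen (toI S) :=
  h.preimage continuous_subtype_val

lemma cell_isOpen (u : List Bool) : IsOpen (cell u) := isOpen_Ioo

lemma toI_cell_nonempty (u : List Bool) : (toI (cell u)).Nonempty := by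
  obtain ⟨x, hx⟩ := cell_nonempty u
  exact ⟨⟨x, Set.Ioo_subset_Icc_self (cell_subset_Ioo u hx)⟩, hx⟩

lemma box_basis {ι : Type} {T : Set (ι → Set.Icc (0:ℝ) 1)}
    (h : @IsOpen _ (boxTopology ι) T) :
    ∀ p ∈ T, ∃ U : ι → Set (Set.Icc (0:ℝ) 1), (∀ i, IsOpen (U i)) ∧ (∀ i, p i ∈ U i) ∧
      Set.pi Set.univ U ⊆ T := by
  have h' : TopologicalSpace.GenerateOpen
      {S | ∃ U : ι → Set (Set.Icc (0:ℝ) 1), (∀ i, IsOpen (U i)) ∧ S = Set.pi Set.univ U} T := h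
  clear h
  induction h' with
  | basic S hS =>
      obtain ⟨U, hU, rfl⟩ := hS
      exact fun p hp => ⟨U, hU, fun i => hp i (Set.mem_univ i), subset_rfl⟩
  | univ =>
      exact fun p _ => ⟨fun _ => Set.univ, fun _ => isOpen_univ, fun _ => Set.mem_univ _,
        fun _ _ => Set.mem_univ _⟩
  | inter S₁ S₂ hS₁ hS₂ ihS₁ ihS₂ =>
      intro p hp
      obtain ⟨U1, hU1, hp1, hs1⟩ := ihS₁ p hp.1
      obtain ⟨U2, hU2, hp2, hs2⟩ := ihS₂ p hp.2
      refine ⟨fun i => U1 i ∩ U2 i, fun i => (hU1 i).inter (hU2 i), fun i => ⟨hp1 i, hp2 i⟩, ?_⟩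
      rw [Set.pi_inter_distrib]
      exact fun x hx => ⟨hs1 hx.1, hs2 hx.2⟩
  | sUnion S hS ih =>
      intro p hp
      obtain ⟨T', hT', hpT⟩ := hp
      obtain ⟨U, hU, hpU, hsub⟩ := ih T' hT' p hpT
      exact ⟨U, hU, hpU, hsub.trans (Set.subset_sUnion_of_mem hT')⟩

section Construction

variable {ι : Type}

lemma boxS_open (C : ι → List Bool) :
    @IsOpen _ (boxTopology ι) (Set.pi Set.univ fun i => toI (cell (C i))) :=
  TopologicalSpace.isOpen_generateFrom_of_mem
    ⟨fun i => toI (cell (C i)), fun i => toI_open (cell_isOpen _), rfl⟩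

lemma step_ex (G : ℕ → Set (ι → Set.Icc (0:ℝ) 1))
    (hop : ∀ n, @IsOpen _ (boxTopology ι) (G n))
    (hde : ∀ n, @Dense _ (boxTopology ι) (G n))
    (C : ι → List Bool) (n : ℕ) :
    ∃ u : ι → List Bool, (∀ i, closure (cell (u i)) ⊆ cell (C i)) ∧
      (Set.pi Set.univ fun i => toI (cell (u i))) ⊆ G n := by
  letI : TopologicalSpace (ι → Set.Icc (0:ℝ) 1) := boxTopology ι
  have hBo := boxS_open (ι := ι) C
  have hBne : (Set.pi Set.univ fun i => toI (cell (C i))).Nonempty :=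
    ⟨fun i => (toI_cell_nonempty (C i)).some, fun i _ => (toI_cell_nonempty (C i)).some_mem⟩
  have hne : ((Set.pi Set.univ fun i => toI (cell (C i))) ∩ G n).Nonempty :=
    (hde n).inter_open_nonempty _ hBo hBne
  obtain ⟨p, hpB, hpG⟩ := hne
  have hopn : @IsOpen _ (boxTopology ι) (G n ∩ Set.pi Set.univ fun i => toI (cell (C i))) :=
    (hop n).inter hBo
  obtain ⟨U, hUo, hpU, hUsub⟩ := box_basis hopn p ⟨hpG, hpB⟩
  have key : ∀ i, ∃ u : List Bool, closure (cell u) ⊆ cell (C i) ∧ toI (cell u) ⊆ U i := by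
    intro i
    obtain ⟨O, hO, hpre⟩ := isOpen_induced_iff.1 (hUo i)
    have hpiO : (p i : ℝ) ∈ O := by
      have := hpU i
      rw [← hpre] at this
      exact this
    have hx : (p i : ℝ) ∈ O ∩ cell (C i) := ⟨hpiO, hpB i (Set.mem_univ i)⟩
    have hx01 : (p i : ℝ) ∈ Set.Ioo (0:ℝ) 1 := cell_subset_Ioo _ hx.2
    obtain ⟨u, hu⟩ := exists_cell_closure_subset (hO.inter (cell_isOpen _)) hx hx01
    refine ⟨u, hu.trans Set.inter_subset_right, ?_⟩
    intro z hz
    have hzO : (z : ℝ) ∈ O := (hu (subset_closure hz)).1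
    rw [← hpre]
    exact hzO
  choose u hu using key
  refine ⟨u, fun i => (hu i).1, ?_⟩
  have hmono : (Set.pi Set.univ fun i => toI (cell (u i))) ⊆ Set.pi Set.univ U :=
    Set.pi_mono fun i _ => (hu i).2
  exact hmono.trans (hUsub.trans Set.inter_subset_left)

variable (G : ℕ → Set (ι → Set.Icc (0:ℝ) 1))
  (hop : ∀ n, @IsOpen _ (boxTopology ι) (G n))
  (hde : ∀ n, @Dense _ (boxTopology ι) (G n))
  (φ : ι → ℕ → Bool)

/-- the chosen refinement cells -/
def chosen (C : ι → List Bool) (n : ℕ) : ι → List Bool :=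
  (step_ex G hop hde C n).choose

lemma chosen_spec1 (C : ι → List Bool) (n : ℕ) (i : ι) :
    closure (cell (chosen G hop hde C n i)) ⊆ cell (C i) :=
  (step_ex G hop hde C n).choose_spec.1 i

lemma chosen_spec2 (C : ι → List Bool) (n : ℕ) :
    (Set.pi Set.univ fun i => toI (cell (chosen G hop hde C n i))) ⊆ G n :=
  (step_ex G hop hde C n).choose_spec.2

/-- the tree of cell addresses; node addressed by reversed list (deepest first) -/
def Atree : List Bool → ι → List Bool
  | [] => fun _ => []
  | d :: s => fun i =>
      chosen G hop hde (Atree s) s.length i ++ d :: List.ofFn (fun k : Fin s.length => φ i (k : ℕ))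

def nodeOf (b : ℕ → Bool) : ℕ → List Bool
  | 0 => []
  | n + 1 => b n :: nodeOf b n

lemma nodeOf_length (b : ℕ → Bool) (n : ℕ) : (nodeOf b n).length = n := by
  induction n with
  | zero => rfl
  | succ n ih => simp [nodeOf, ih]

lemma nodeOf_congr {b b' : ℕ → Bool} {n : ℕ} (h : ∀ k < n, b k = b' k) :
    nodeOf b n = nodeOf b' n := by
  induction n with
  | zero => rfl
  | succ n ih =>
      simp only [nodeOf]
      rw [h n (Nat.lt_succ_self n), ih (fun k hk => h k (Nat.lt_succ_of_lt hk))]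

lemma cell_Atree_cons_subset (s : List Bool) (d : Bool) (i : ι) :
    cell (Atree G hop hde φ (d :: s) i) ⊆
      cell (chosen G hop hde (Atree G hop hde φ s) s.length i) := by
  show cell (_ ++ _) ⊆ _
  exact cell_append_subset _ _

lemma closure_cell_Atree_cons (s : List Bool) (d : Bool) (i : ι) :
    closure (cell (Atree G hop hde φ (d :: s) i)) ⊆ cell (Atree G hop hde φ s i) :=
  (closure_mono (cell_Atree_cons_subset G hop hde φ s d i)).trans
    (chosen_spec1 G hop hde (Atree G hop hde φ s) s.length i)

def Sset (b : ℕ → Bool) (i : ι) (n : ℕ) : Set ℝ :=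
  closure (cell (Atree G hop hde φ (nodeOf b n) i))

lemma Sset_succ_subset (b : ℕ → Bool) (i : ι) (n : ℕ) :
    Sset G hop hde φ b i (n + 1) ⊆ cell (Atree G hop hde φ (nodeOf b n) i) :=
  closure_cell_Atree_cons G hop hde φ (nodeOf b n) (b n) i

lemma Sset_antitone (b : ℕ → Bool) (i : ι) (n : ℕ) :
    Sset G hop hde φ b i (n + 1) ⊆ Sset G hop hde φ b i n :=
  (Sset_succ_subset G hop hde φ b i n).trans subset_closure

lemma Sset_inter_nonempty (b : ℕ → Bool) (i : ι) :
    (⋂ n, Sset G hop hde φ b i n).Nonempty := by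
  apply IsCompact.nonempty_iInter_of_sequence_nonempty_isCompact_isClosed
  · exact fun n => Sset_antitone G hop hde φ b i n
  · exact fun n => (cell_nonempty _).mono subset_closure
  · rw [Sset, closure_cell]; exact isCompact_Icc
  · exact fun n => isClosed_closure

/-- the coordinate value along branch `b` -/
def zreal (b : ℕ → Bool) (i : ι) : ℝ := (Sset_inter_nonempty G hop hde φ b i).some

lemma zreal_mem_cell (b : ℕ → Bool) (i : ι) (n : ℕ) :
    zreal G hop hde φ b i ∈ cell (Atree G hop hde φ (nodeOf b n) i) := by
  have h := (Sset_inter_nonempty G hop hde φ b i).some_mem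
  exact Sset_succ_subset G hop hde φ b i n (Set.mem_iInter.1 h (n + 1))

lemma zreal_icc (b : ℕ → Bool) (i : ι) : zreal G hop hde φ b i ∈ Set.Icc (0:ℝ) 1 :=
  Set.Ioo_subset_Icc_self (cell_subset_Ioo _ (zreal_mem_cell G hop hde φ b i 0))

lemma zreal_mem_chosen (b : ℕ → Bool) (i : ι) (n : ℕ) :
    zreal G hop hde φ b i ∈
      cell (chosen G hop hde (Atree G hop hde φ (nodeOf b n)) (nodeOf b n).length i) :=
  cell_Atree_cons_subset G hop hde φ (nodeOf b n) (b n) i (zreal_mem_cell G hop hde φ b i (n + 1))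

/-- the point of the box product along branch `b` -/
def xfun (b : ℕ → Bool) : ι → Set.Icc (0:ℝ) 1 :=
  fun i => ⟨zreal G hop hde φ b i, zreal_icc G hop hde φ b i⟩

lemma xfun_mem (b : ℕ → Bool) (n : ℕ) : xfun G hop hde φ b ∈ G n := by
  have h2 := chosen_spec2 G hop hde (Atree G hop hde φ (nodeOf b n)) (nodeOf b n).length
  have h3 : ∀ i, zreal G hop hde φ b i ∈
      cell (chosen G hop hde (Atree G hop hde φ (nodeOf b n)) (nodeOf b n).length i) :=
    fun i => zreal_mem_chosen G hop hde φ b i n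
  rw [nodeOf_length] at h2 h3
  exact h2 (fun i _ => h3 i)

/- ### list comparison helpers -/

lemma prefix_strip {α : Type} (u : List α) {x y : List α} (h : u ++ x <+: u ++ y) : x <+: y := by
  induction u with
  | nil => exact h
  | cons a t ih =>
      simp only [List.cons_append, List.cons_prefix_cons] at h
      exact ih h.2

lemma comp_strip {α : Type} (u : List α) {x y : List α}
    (h : u ++ x <+: u ++ y ∨ u ++ y <+: u ++ x) : x <+: y ∨ y <+: x :=
  h.imp (prefix_strip u) (prefix_strip u)

lemma head_eq_of_comp {a a' : Bool} {x y : List Bool}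
    (h : a :: x <+: a' :: y ∨ a' :: y <+: a :: x) : a = a' := by
  rcases h with h | h
  · exact (List.cons_prefix_cons.1 h).1
  · exact ((List.cons_prefix_cons.1 h).1).symm

lemma head_determined {P t' x y : List Bool} {a d : Bool} {z : ℝ}
    (h1 : z ∈ cell (P ++ d :: x)) (h2 : z ∈ cell ((P ++ a :: t') ++ d :: y)) : d = a := by
  rw [List.append_assoc, List.cons_append] at h2
  exact head_eq_of_comp (comp_strip P (comparable_of_mem_cell h1 h2))

/-- relative class address at a node -/
def clsOf (s : List Bool) (i : ι) : List Bool :=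
  List.ofFn (fun k : Fin s.length => φ i (k : ℕ))

/-- the chosen cell at a node -/
def Pfun (s : List Bool) : ι → List Bool :=
  chosen G hop hde (Atree G hop hde φ s) s.length

lemma Atree_cons (s : List Bool) (d : Bool) (i : ι) :
    Atree G hop hde φ (d :: s) i = Pfun G hop hde φ s i ++ d :: clsOf φ s i := rfl

lemma cls_eq_imp {s : List Bool} {i j : ι} (h : clsOf φ s i = clsOf φ s j) :
    ∀ k < s.length, φ i k = φ j k := by
  intro k hk
  have h2 := List.ofFn_injective h
  exact congrFun h2 ⟨k, hk⟩

lemma bad_determined {i j : ι} {m : ℕ} (hφ : φ i m ≠ φ j m)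
    {b b' : ℕ → Bool}
    (hzb : zreal G hop hde φ b i = zreal G hop hde φ b j)
    (hzb' : zreal G hop hde φ b' i = zreal G hop hde φ b' j)
    (hpre : ∀ k, k ≤ m → b k = b' k) : b = b' := by
  funext n
  induction n using Nat.strong_induction_on with
  | _ n IH =>
    rcases le_or_gt n m with hnm | hnm
    · exact hpre n hnm
    · have hnode : nodeOf b' n = nodeOf b n :=
        (nodeOf_congr (fun k hk => IH k hk)).symm
      have hlen : (nodeOf b n).length = n := nodeOf_length b n
      have w1 : zreal G hop hde φ b i ∈
          cell (Pfun G hop hde φ (nodeOf b n) i ++ b n :: clsOf φ (nodeOf b n) i) := by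
        have h0 := zreal_mem_cell G hop hde φ b i (n + 1)
        rwa [show nodeOf b (n + 1) = b n :: nodeOf b n from rfl, Atree_cons] at h0
      have w2 : zreal G hop hde φ b i ∈
          cell (Pfun G hop hde φ (nodeOf b n) j ++ b n :: clsOf φ (nodeOf b n) j) := by
        have h0 := zreal_mem_cell G hop hde φ b j (n + 1)
        rw [show nodeOf b (n + 1) = b n :: nodeOf b n from rfl, Atree_cons] at h0
        rwa [hzb]
      have w1' : zreal G hop hde φ b' i ∈
          cell (Pfun G hop hde φ (nodeOf b n) i ++ b' n :: clsOf φ (nodeOf b n) i) := by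
        have h0 := zreal_mem_cell G hop hde φ b' i (n + 1)
        rw [show nodeOf b' (n + 1) = b' n :: nodeOf b' n from rfl, hnode] at h0
        rwa [Atree_cons] at h0
      have w2' : zreal G hop hde φ b' i ∈
          cell (Pfun G hop hde φ (nodeOf b n) j ++ b' n :: clsOf φ (nodeOf b n) j) := by
        have h0 := zreal_mem_cell G hop hde φ b' j (n + 1)
        rw [show nodeOf b' (n + 1) = b' n :: nodeOf b' n from rfl, hnode] at h0
        rw [Atree_cons] at h0
        rwa [hzb']
      have hPm1 : zreal G hop hde φ b i ∈ cell (Pfun G hop hde φ (nodeOf b n) i) :=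
        cell_append_subset _ _ w1
      have hPm2 : zreal G hop hde φ b i ∈ cell (Pfun G hop hde φ (nodeOf b n) j) :=
        cell_append_subset _ _ w2
      by_cases hPP : Pfun G hop hde φ (nodeOf b n) i = Pfun G hop hde φ (nodeOf b n) j
      · exfalso
        rw [hPP] at w1
        have hcc := comp_strip _ (comparable_of_mem_cell w1 w2)
        have hlencls : (b n :: clsOf φ (nodeOf b n) i).length =
            (b n :: clsOf φ (nodeOf b n) j).length := by
          simp [clsOf]
        have hcij : clsOf φ (nodeOf b n) i = clsOf φ (nodeOf b n) j := by
          rcases hcc with h | h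
          · have h3 := h.eq_of_length hlencls
            injection h3
          · have h3 := (h.eq_of_length hlencls.symm).symm
            injection h3
        exact hφ (cls_eq_imp φ hcij m (by rw [hlen]; exact hnm))
      · rcases comparable_of_mem_cell hPm1 hPm2 with hc | hc
        · obtain ⟨t, ht⟩ := hc
          cases t with
          | nil => exact absurd (by rw [← ht, List.append_nil]) hPP
          | cons a t' =>
              rw [← ht] at w2 w2'
              have e1 : b n = a := head_determined w1 w2
              have e2 : b' n = a := head_determined w1' w2'
              rw [e1, e2]
        · obtain ⟨t, ht⟩ := hc
          cases t with
          | nil =>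
              refine absurd ?_ hPP
              rw [← ht, List.append_nil]
          | cons a t' =>
              rw [← ht] at w1 w1'
              have e1 : b n = a := head_determined w2 w1
              have e2 : b' n = a := head_determined w2' w1'
              rw [e1, e2]

end Construction

lemma mk_seq_bool : Cardinal.mk (ℕ → Bool) = Cardinal.continuum := by
  rw [← Cardinal.two_power_aleph0, Cardinal.mk_arrow]
  simp [Cardinal.mk_bool, Cardinal.mk_nat]

end BoxAux

/-- If `ℵ₁ ≤ κ < 2^ℵ₀` and the `G n` are dense open in the box product topology on
`Π (κ) [0,1]`, then some injective function lies in `⋂ n, G n`. -/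
theorem stmt1 {ι : Type} (h1 : Cardinal.aleph 1 ≤ Cardinal.mk ι)
    (h2 : Cardinal.mk ι < Cardinal.continuum)
    (G : ℕ → Set (ι → Set.Icc (0:ℝ) 1))
    (hopen : ∀ n, @IsOpen _ (boxTopology ι) (G n))
    (hdense : ∀ n, @Dense _ (boxTopology ι) (G n)) :
    ∃ x : ι → Set.Icc (0:ℝ) 1, Function.Injective x ∧ ∀ n, x ∈ G n := by
  classical
  obtain ⟨e⟩ : Nonempty (ι ↪ (ℕ → Bool)) := by
    rw [← Cardinal.le_def, BoxAux.mk_seq_bool]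
    exact h2.le
  let φ : ι → ℕ → Bool := fun i => e i
  let Idx := {q : ι × ι // q.1 ≠ q.2}
  let Bad : Idx → Set (ℕ → Bool) := fun q =>
    {b | BoxAux.zreal G hopen hdense φ b q.1.1 = BoxAux.zreal G hopen hdense φ b q.1.2}
  have hBadSmall : ∀ q : Idx, Cardinal.mk (Bad q) ≤ Cardinal.aleph0 := by
    rintro ⟨⟨i, j⟩, hij⟩
    have hφne : φ i ≠ φ j := fun h => hij (e.injective h)
    obtain ⟨m, hm⟩ := Function.ne_iff.1 hφne
    have hinj : Function.Injective
        (fun b : Bad ⟨(i, j), hij⟩ => (fun k : Fin (m + 1) => b.1 k)) := by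
      rintro ⟨b, hb⟩ ⟨b', hb'⟩ h
      apply Subtype.ext
      refine BoxAux.bad_determined G hopen hdense φ hm hb hb' ?_
      intro k hk
      exact congrFun h ⟨k, Nat.lt_succ_of_le hk⟩
    calc Cardinal.mk (Bad ⟨(i, j), hij⟩) ≤ Cardinal.mk (Fin (m + 1) → Bool) :=
          Cardinal.mk_le_of_injective hinj
      _ ≤ Cardinal.aleph0 := Cardinal.mk_le_aleph0
  have hUn : Cardinal.mk (⋃ q : Idx, Bad q) < Cardinal.continuum := by
    calc Cardinal.mk (⋃ q : Idx, Bad q)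
        ≤ Cardinal.mk Idx * ⨆ q : Idx, Cardinal.mk (Bad q) := Cardinal.mk_iUnion_le _
      _ ≤ Cardinal.mk Idx * Cardinal.aleph0 := mul_le_mul' le_rfl (ciSup_le' hBadSmall)
      _ < Cardinal.continuum := by
          apply Cardinal.mul_lt_of_lt Cardinal.aleph0_le_continuum
          · calc Cardinal.mk Idx ≤ Cardinal.mk (ι × ι) := Cardinal.mk_subtype_le _
              _ < Cardinal.continuum := by
                  rw [Cardinal.mk_prod]
                  simp only [Cardinal.lift_id]
                  exact Cardinal.mul_lt_of_lt Cardinal.aleph0_le_continuum h2 h2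
          · exact Cardinal.aleph0_lt_continuum
  have hex : ∃ b : ℕ → Bool, b ∉ ⋃ q : Idx, Bad q := by
    by_contra hc
    push_neg at hc
    have heq : (⋃ q : Idx, Bad q) = Set.univ := Set.eq_univ_of_forall hc
    rw [heq, Cardinal.mk_univ, BoxAux.mk_seq_bool] at hUn
    exact lt_irrefl _ hUn
  obtain ⟨b, hbnot⟩ := hex
  refine ⟨BoxAux.xfun G hopen hdense φ b, ?_, fun n => BoxAux.xfun_mem G hopen hdense φ b n⟩
  intro i j hxy
  by_contra hne
  apply hbnot
  have hz : BoxAux.zreal G hopen hdense φ b i = BoxAux.zreal G hopen hdense φ b j :=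
    congrArg Subtype.val hxy
  exact Set.mem_iUnion.2 ⟨⟨(i, j), hne⟩, hz⟩
end
end

section
/- Suppose 2^ℵ₀ is regular and there is an enumeration {r_α : α < 2^ℵ₀} of the real numbers in [0,1] such that for every β < 2^ℵ₀ the set {r_α : α < β} is of first category in [0,1]. Then every countable intersection of dense open sets in the box product Π_{α<2^ℵ₀}[0,1] contains a function that is injective on a closed unbounded subset of 2^ℵ₀. -/
/-- The ordinals below `2^ℵ₀`. -/
abbrev Theta : Type 1 := {o : Ordinal // o < Cardinal.continuum.ord}

/-- `C` is closed unbounded in `2^ℵ₀`: unbounded, and closed under suprema of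
nonempty (bounded below the continuum) subsets. -/
def IsClubTheta (C : Set Theta) : Prop :=
  (∀ a : Theta, ∃ b ∈ C, a < b) ∧
  (∀ s : Set Ordinal, s ⊆ Subtype.val '' C → s.Nonempty →
    ∀ h : sSup s < Cardinal.continuum.ord, (⟨sSup s, h⟩ : Theta) ∈ C)

section Aux

open Set TopologicalSpace

/-- Shorthand for the unit interval as a subtype. -/
abbrev AuxII := Set.Icc (0:ℝ) 1

/-- Regularity of the continuum transfers down to universe 0. -/
lemma aux_reg_down (hreg : Cardinal.continuum.{u}.IsRegular) :
    Cardinal.continuum.{0}.IsRegular := by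
  constructor
  · exact Cardinal.aleph0_le_continuum
  · have h2 := hreg.2
    rw [← Cardinal.lift_continuum.{u,0}, ← Cardinal.lift_ord, ← Ordinal.lift_cof] at h2
    exact Cardinal.lift_le.mp h2

/-- Every open set in the box topology contains a box around each of its points. -/
lemma aux_exists_box {ι : Type*} {s : Set (ι → AuxII)}
    (hs : @IsOpen _ (TopologicalSpace.generateFrom
      {S | ∃ U : ι → Set AuxII, (∀ i, IsOpen (U i)) ∧ S = Set.pi Set.univ U}) s)
    {x : ι → AuxII} (hx : x ∈ s) :
    ∃ U : ι → Set AuxII, (∀ i, IsOpen (U i)) ∧ x ∈ Set.pi Set.univ U ∧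
      Set.pi Set.univ U ⊆ s := by
  have hs' : TopologicalSpace.GenerateOpen
      {S | ∃ U : ι → Set AuxII, (∀ i, IsOpen (U i)) ∧ S = Set.pi Set.univ U} s := hs
  clear hs
  induction hs' with
  | basic S hS =>
      obtain ⟨U, hU, rfl⟩ := hS
      exact ⟨U, hU, hx, subset_rfl⟩
  | univ => exact ⟨fun _ => Set.univ, fun _ => isOpen_univ, by simp, by simp⟩
  | inter a b ha hb iha ihb =>
      obtain ⟨U, hU, hxU, hUs⟩ := iha hx.1
      obtain ⟨V, hV, hxV, hVs⟩ := ihb hx.2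
      refine ⟨fun i => U i ∩ V i, fun i => (hU i).inter (hV i),
        fun i _ => ⟨hxU i trivial, hxV i trivial⟩, ?_⟩
      intro y hy
      exact ⟨hUs fun i _ => (hy i trivial).1, hVs fun i _ => (hy i trivial).2⟩
  | sUnion S hS ih =>
      obtain ⟨t, htS, hxt⟩ := hx
      obtain ⟨U, hU, hxU, hUt⟩ := ih t htS hxt
      exact ⟨U, hU, hxU, hUt.trans (Set.subset_sUnion_of_mem htS)⟩

/-- Inside a nonempty open set we can shrink to an open set whose closure avoids a
given nowhere dense set. -/
lemma aux_shrink {V : Set AuxII} (hV : IsOpen V) (hne : V.Nonempty) {N : Set AuxII}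
    (hN : IsNowhereDense N) :
    ∃ W : Set AuxII, IsOpen W ∧ W.Nonempty ∧ closure W ⊆ V ∧ Disjoint (closure W) N := by
  have h1 : (V \ closure N).Nonempty := by
    rw [Set.diff_nonempty]
    intro hsub
    have : V ⊆ interior (closure N) := hV.subset_interior_iff.mpr hsub
    rw [hN] at this
    exact hne.not_subset_empty this
  obtain ⟨x, hxV, hxN⟩ := h1
  obtain ⟨r, hr, hball⟩ := Metric.isOpen_iff.mp (hV.sdiff isClosed_closure) x ⟨hxV, hxN⟩
  refine ⟨Metric.ball x (r/2), Metric.isOpen_ball, ⟨x, Metric.mem_ball_self (by linarith)⟩,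
    ?_, ?_⟩
  · intro y hy
    have : y ∈ Metric.closedBall x (r/2) := Metric.closure_ball_subset_closedBall hy
    exact (hball (Metric.closedBall_subset_ball (by linarith) this)).1
  · intro s hs1 hs2 y hy
    have h3 := hs1 hy
    have : y ∈ Metric.closedBall x (r/2) := Metric.closure_ball_subset_closedBall h3
    exact ((hball (Metric.closedBall_subset_ball (by linarith) this)).2)
      (subset_closure (hs2 hy))

/-- The fusion argument: countably many dense open sets in the box product have a common
point which moreover avoids, in each coordinate `i`, a prescribed countable family of
nowhere dense subsets of `[0,1]`. -/
lemma aux_fusion {ι : Type*} (G : ℕ → Set (ι → AuxII))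
    (hopen : ∀ n, @IsOpen _ (TopologicalSpace.generateFrom
      {S | ∃ U : ι → Set AuxII, (∀ i, IsOpen (U i)) ∧ S = Set.pi Set.univ U}) (G n))
    (hdense : ∀ n, @Dense _ (TopologicalSpace.generateFrom
      {S | ∃ U : ι → Set AuxII, (∀ i, IsOpen (U i)) ∧ S = Set.pi Set.univ U}) (G n))
    (N : ι → ℕ → Set AuxII) (hN : ∀ i n, IsNowhereDense (N i n)) :
    ∃ f : ι → AuxII, (∀ n, f ∈ G n) ∧ ∀ i n, f i ∉ N i n := by
  classical
  set τ := TopologicalSpace.generateFrom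
      {S | ∃ U : ι → Set AuxII, (∀ i, IsOpen (U i)) ∧ S = Set.pi Set.univ U} with hτ
  set P : (ι → Set AuxII) → Prop := fun U => ∀ i, IsOpen (U i) ∧ (U i).Nonempty with hP
  have step : ∀ (n : ℕ) (U : ι → Set AuxII), ∃ V : ι → Set AuxII, P U →
      ((∀ i, IsOpen (V i) ∧ (V i).Nonempty ∧ closure (V i) ⊆ U i ∧
        Disjoint (closure (V i)) (N i n)) ∧ Set.pi Set.univ V ⊆ G n) := by
    intro n U
    by_cases hU : P U
    · have hBopen : @IsOpen _ τ (Set.pi Set.univ U) := by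
        exact TopologicalSpace.GenerateOpen.basic _ ⟨U, fun i => (hU i).1, rfl⟩
      have hBne : (Set.pi Set.univ U).Nonempty :=
        ⟨fun i => ((hU i).2).some, fun i _ => ((hU i).2).some_mem⟩
      obtain ⟨y, hyB, hyG⟩ :=
        (@dense_iff_inter_open (ι → AuxII) τ (G n)).mp (hdense n) (Set.pi Set.univ U)
          hBopen hBne
      obtain ⟨V', hV', hyV', hV'G⟩ := aux_exists_box (hopen n) hyG
      have hW : ∀ i, IsOpen (V' i ∩ U i) ∧ (V' i ∩ U i).Nonempty := fun i =>
        ⟨(hV' i).inter (hU i).1, ⟨y i, hyV' i trivial, hyB i trivial⟩⟩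
      have hsh : ∀ i, ∃ W : Set AuxII, IsOpen W ∧ W.Nonempty ∧ closure W ⊆ V' i ∩ U i ∧
          Disjoint (closure W) (N i n) := fun i => aux_shrink (hW i).1 (hW i).2 (hN i n)
      choose V hV1 hV2 hV3 hV4 using hsh
      refine ⟨V, fun _ => ⟨fun i => ⟨hV1 i, hV2 i, fun x hx => (hV3 i hx).2, hV4 i⟩, ?_⟩⟩
      intro z hz
      exact hV'G fun i _ => (hV3 i (subset_closure (hz i trivial))).1
    · exact ⟨U, fun h => absurd h hU⟩
  choose F hF using step
  obtain ⟨seq, hseq0, hseqS⟩ : ∃ seq : ℕ → ι → Set AuxII, seq 0 = (fun _ => Set.univ) ∧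
      ∀ n, seq (n+1) = F n (seq n) :=
    ⟨fun n => Nat.rec (fun _ => Set.univ) F n, rfl, fun n => rfl⟩
  have hPseq : ∀ n, P (seq n) := by
    intro n
    induction n with
    | zero => rw [hseq0]; exact fun i => ⟨isOpen_univ, Set.univ_nonempty⟩
    | succ n ih =>
        rw [hseqS]
        exact fun i => ⟨((hF n (seq n) ih).1 i).1, ((hF n (seq n) ih).1 i).2.1⟩
  have hprop : ∀ n, (∀ i, closure (seq (n+1) i) ⊆ seq n i ∧
      Disjoint (closure (seq (n+1) i)) (N i n)) ∧ Set.pi Set.univ (seq (n+1)) ⊆ G n := by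
    intro n
    rw [hseqS]
    exact ⟨fun i => ⟨((hF n (seq n) (hPseq n)).1 i).2.2.1,
      ((hF n (seq n) (hPseq n)).1 i).2.2.2⟩, (hF n (seq n) (hPseq n)).2⟩
  have hK : ∀ i, (⋂ n, closure (seq (n+1) i)).Nonempty := by
    intro i
    refine IsCompact.nonempty_iInter_of_sequence_nonempty_isCompact_isClosed _
      (fun n => ?_) (fun n => ((hPseq (n+1) i).2).closure)
      isClosed_closure.isCompact (fun n => isClosed_closure)
    exact (((hprop (n+1)).1 i).1).trans subset_closure
  choose f hf using hK
  have hmem : ∀ i n, f i ∈ seq (n+1) i := by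
    intro i n
    have := Set.mem_iInter.mp (hf i) (n+1)
    exact ((hprop (n+1)).1 i).1 this
  refine ⟨f, fun n => (hprop n).2 fun i _ => hmem i n, fun i n => ?_⟩
  intro hfN
  exact (((hprop n).1 i).2).ne_of_mem (Set.mem_iInter.mp (hf i) n) hfN rfl

end Aux

/-- If `2^ℵ₀` is regular and `r` enumerates `[0,1]` so that every proper initial
segment is of first category, then every countable intersection of dense open sets
in the box product contains a function injective on a club of `2^ℵ₀`. -/
theorem stmt2
    (hreg : Cardinal.continuum.IsRegular)
    (r : Theta → Set.Icc (0:ℝ) 1)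
    (hsurj : Function.Surjective r)
    (hmeager : ∀ b : Theta, IsMeagre {x : Set.Icc (0:ℝ) 1 | ∃ a < b, r a = x})
    (G : ℕ → Set (Theta → Set.Icc (0:ℝ) 1))
    (hopen : ∀ n, @IsOpen _ (boxTopology Theta) (G n))
    (hdense : ∀ n, @Dense _ (boxTopology Theta) (G n)) :
    ∃ f : Theta → Set.Icc (0:ℝ) 1, (∀ n, f ∈ G n) ∧
      ∃ C : Set Theta, IsClubTheta C ∧ Set.InjOn f C := by
  classical
  have hreg0 : Cardinal.continuum.{0}.IsRegular := aux_reg_down hreg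
  -- decompose each initial segment into countably many nowhere dense sets
  have hNex : ∀ i : Theta, ∃ N : ℕ → Set AuxII, (∀ n, IsNowhereDense (N n)) ∧
      {x : AuxII | ∃ a < i, r a = x} ⊆ ⋃ n, N n := by
    intro i
    obtain ⟨S, hS1, hS2, hS3⟩ := isMeagre_iff_countable_union_isNowhereDense.mp (hmeager i)
    have hc : (insert (∅ : Set AuxII) S).Countable := hS2.insert _
    obtain ⟨Nf, hNf⟩ := hc.exists_eq_range ⟨∅, Set.mem_insert _ _⟩
    refine ⟨Nf, ?_, ?_⟩
    · intro n
      have hmem : Nf n ∈ insert (∅ : Set AuxII) S := hNf ▸ Set.mem_range_self n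
      rcases hmem with h | h
      · rw [h]; simp [IsNowhereDense]
      · exact hS1 _ h
    · refine hS3.trans ?_
      rw [← Set.sUnion_range Nf, ← hNf]
      exact Set.sUnion_subset_sUnion (Set.subset_insert _ _)
  choose N hN1 hN2 using hNex
  obtain ⟨f, hfG, hfN⟩ := aux_fusion G hopen hdense N hN1
  have havoid : ∀ i : Theta, f i ∉ {x : AuxII | ∃ a < i, r a = x} := by
    intro i hin
    obtain ⟨n, hn⟩ := Set.mem_iUnion.mp (hN2 i hin)
    exact hfN i n hn
  choose o ho using fun i => hsurj (f i)
  have hlim : Order.IsSuccLimit Cardinal.continuum.{0}.ord := Cardinal.isSuccLimit_ord hreg0.1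
  -- the "next" function used to build closure points
  have hnxt : ∀ b : Theta, ∃ b' : Theta, b < b' ∧ ∀ β : Theta, β ≤ b → o β < b' := by
    intro b
    have hb1 : b.val + 1 < Cardinal.continuum.ord := by
      have := hlim.succ_lt b.prop; rwa [Ordinal.add_one_eq_succ]
    set e := (Ordinal.ToType.mk : Set.Iio (b.val + 1) ≃o _) with he
    set F : (b.val + 1).ToType → Ordinal :=
      fun x => (o ⟨(e.symm x).val, lt_trans (e.symm x).prop hb1⟩).val + 1 with hF
    have hsup : iSup F < Cardinal.continuum.ord := by
      refine Ordinal.iSup_lt_ord ?_ fun x => ?_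
      · rw [Cardinal.mk_toType, hreg0.cof_eq]
        exact Cardinal.lt_ord.mp hb1
      · show (o _).val + 1 < _
        have := hlim.succ_lt (o ⟨(e.symm x).val, lt_trans (e.symm x).prop hb1⟩).prop
        rwa [Ordinal.add_one_eq_succ]
    have hm : max (iSup F) (b.val + 1) < Cardinal.continuum.ord := max_lt hsup hb1
    refine ⟨⟨max (iSup F) (b.val + 1), hm⟩, ?_, ?_⟩
    · have h1 : b.val < b.val + 1 := by
        rw [Ordinal.add_one_eq_succ]; exact Order.lt_succ _
      exact Subtype.mk_lt_mk.mpr (lt_of_lt_of_le h1 (le_max_right _ _))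
    · intro β hβ
      have hβ1 : β.val < b.val + 1 := lt_of_le_of_lt hβ
        (by rw [Ordinal.add_one_eq_succ]; exact Order.lt_succ _)
      have hx : F (e ⟨β.val, hβ1⟩) = (o β).val + 1 := by
        simp only [hF, e.symm_apply_apply]
      have h2 : (o β).val + 1 ≤ iSup F := hx ▸ Ordinal.le_iSup F (e ⟨β.val, hβ1⟩)
      have h3 : (o β).val < (o β).val + 1 := by
        rw [Ordinal.add_one_eq_succ]; exact Order.lt_succ _
      exact Subtype.mk_lt_mk.mpr
        (lt_of_lt_of_le (lt_of_lt_of_le h3 h2) (le_max_left _ _))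
  choose nxt hnxt1 hnxt2 using hnxt
  refine ⟨f, hfG, {x : Theta | ∀ β : Theta, β < x → o β < x}, ⟨?_, ?_⟩, ?_⟩
  · -- unbounded
    intro a
    obtain ⟨g, hg0, hgS⟩ : ∃ g : ℕ → Theta, g 0 = nxt a ∧ ∀ k, g (k+1) = nxt (g k) :=
      ⟨fun k => Nat.rec (nxt a) (fun _ x => nxt x) k, rfl, fun _ => rfl⟩
    have hα : iSup (fun k => (g k).val) < Cardinal.continuum.ord := by
      refine Ordinal.iSup_lt_ord ?_ fun k => (g k).prop
      rw [hreg0.cof_eq, Cardinal.mk_nat]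
      exact Cardinal.aleph0_lt_continuum
    refine ⟨⟨_, hα⟩, ?_, ?_⟩
    · intro β hβ
      have hβ' : β.val < iSup (fun k => (g k).val) := hβ
      rw [Ordinal.lt_iSup_iff] at hβ'
      obtain ⟨k, hk⟩ := hβ'
      have hβk : β ≤ g k := le_of_lt hk
      have h5 : o β < g (k+1) := hgS k ▸ hnxt2 (g k) β hβk
      exact lt_of_lt_of_le h5 (Ordinal.le_iSup (fun k => (g k).val) (k+1))
    · have h1 : a < g 0 := hg0 ▸ hnxt1 a
      have h2 : (g 0).val ≤ iSup (fun k => (g k).val) := Ordinal.le_iSup _ 0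
      exact lt_of_lt_of_le h1 h2
  · -- closed
    intro s hsub hne h β hβ
    have hβ' : β.val < sSup s := hβ
    have hbdd : BddAbove s := ⟨Cardinal.continuum.ord, fun z hz => by
      obtain ⟨δ, hδC, rfl⟩ := hsub hz
      exact le_of_lt δ.prop⟩
    have hex : ∃ γ ∈ s, β.val < γ := by
      by_contra hcon
      push_neg at hcon
      exact absurd (csSup_le hne hcon) (not_le.mpr hβ')
    obtain ⟨γ, hγs, hβγ⟩ := hex
    obtain ⟨δ, hδC, rfl⟩ := hsub hγs
    have h6 : o β < δ := hδC β hβγ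
    exact lt_of_lt_of_le h6 (le_csSup hbdd hγs)
  · -- injective
    have key : ∀ x y : Theta,
        (y ∈ {x : Theta | ∀ β : Theta, β < x → o β < x}) → x < y → f x ≠ f y := by
      intro x y hy hxy heq
      exact havoid y ⟨o x, hy x hxy, by rw [ho x, heq]⟩
    intro x hx y hy heq
    by_contra hne'
    rcases lt_or_gt_of_ne hne' with h | h
    · exact key x y hy h heq
    · exact key y x hx h heq.symm
end

section
/- In the box product topology on Π_{ι<κ}[0,1], for every dense open set G and every nonempty open box B = Π_{ι<κ} B_ι (each B_ι a nonempty open subinterval of [0,1]) and every n < ω, there exists an open box A = Π_{ι<κ} A_ι such that: each A_ι is of the form I_ρ for some finite sequence ρ of length > n (where {I_ρ} is a fixed dyadic-style family of nested rational intervals whose diameters tend to 0 with length(ρ)), the closure of A_ι is contained in B_ι for each ι, and A ⊆ G. -/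
/-- Validity of an index sequence for the interval family. -/
inductive ValidL : List ℕ → Prop
  | nil : ValidL []
  | snoc {ρ : List ℕ} {k : ℕ} : ValidL ρ → k < 2 ^ 2 ^ ρ.length → ValidL (ρ ++ [k])

lemma ioo_eq_endpoints {a b c d : ℝ} (h : Set.Ioo a b = Set.Ioo c d) (hab : a < b) :
    a = c ∧ b = d := by
  have hcd : c < d := by
    rcases Set.nonempty_Ioo.2 hab with ⟨y, hy⟩
    rw [h] at hy; exact hy.1.trans hy.2
  constructor
  · rw [← csInf_Ioo hab, ← csInf_Ioo hcd, h]
  · rw [← csSup_Ioo hab, ← csSup_Ioo hcd, h]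

/-- Diameter bound: a valid interval at depth `m` has length at most `(1/2)^m`. -/
lemma diam_le (I : List ℕ → Set ℝ)
    (h0 : I [] = Set.Ioo 0 1)
    (hint : ∀ ρ, ∃ a b : ℝ, a < b ∧ I ρ = Set.Ioo a b ∧ I ρ ⊆ Set.Ioo 0 1)
    (hnest : ∀ (ρ : List ℕ) (k : ℕ), I (ρ ++ [k]) ⊆ I ρ)
    (hdisj : ∀ ρ : List ℕ, ∀ k < 2 ^ 2 ^ ρ.length, ∀ l < 2 ^ 2 ^ ρ.length, k ≠ l →
      Disjoint (I (ρ ++ [k])) (I (ρ ++ [l])))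
    (heq : ∀ ρ : List ℕ, ∃ len : ℝ, ∀ k < 2 ^ 2 ^ ρ.length,
      ∃ a : ℝ, I (ρ ++ [k]) = Set.Ioo a (a + len)) :
    ∀ ρ, ValidL ρ → ∀ a b : ℝ, a < b → I ρ = Set.Ioo a b →
      b - a ≤ (1/2 : ℝ) ^ ρ.length := by
  intro ρ hv
  induction hv with
  | nil =>
    intro a b hab hI
    rw [h0] at hI
    obtain ⟨h1, h2⟩ := ioo_eq_endpoints hI one_pos
    simp [← h1, ← h2]
  | @snoc ρ k hρ hk IH =>
    intro a b hab hI
    obtain ⟨A, B, hAB, hIρ, _⟩ := hint ρ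
    have hBA := IH A B hAB hIρ
    obtain ⟨len, hlen⟩ := heq ρ
    have h2m : 2 ≤ 2 ^ 2 ^ ρ.length := by
      calc 2 = 2 ^ 1 := rfl
        _ ≤ 2 ^ 2 ^ ρ.length := Nat.pow_le_pow_right (by norm_num) Nat.one_le_two_pow
    obtain ⟨a0, h0'⟩ := hlen 0 (by omega)
    obtain ⟨a1, h1'⟩ := hlen 1 (by omega)
    obtain ⟨ak, hk'⟩ := hlen k hk
    rw [hI] at hk'
    obtain ⟨hak, hbk⟩ := ioo_eq_endpoints hk' hab
    have hlenpos : 0 < len := by linarith [hab, hak, hbk]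
    -- children 0 and 1 are subsets of Ioo A B
    have hs0 : Set.Ioo a0 (a0 + len) ⊆ Set.Ioo A B := by
      rw [← h0', ← hIρ]; exact hnest ρ 0
    have hs1 : Set.Ioo a1 (a1 + len) ⊆ Set.Ioo A B := by
      rw [← h1', ← hIρ]; exact hnest ρ 1
    have hb0 : A ≤ a0 ∧ a0 + len ≤ B :=
      (Set.Ioo_subset_Ioo_iff (by linarith)).mp hs0
    have hb1 : A ≤ a1 ∧ a1 + len ≤ B :=
      (Set.Ioo_subset_Ioo_iff (by linarith)).mp hs1
    have hd : Disjoint (Set.Ioo a0 (a0 + len)) (Set.Ioo a1 (a1 + len)) := by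
      rw [← h0', ← h1']
      exact hdisj ρ 0 (by omega) 1 (by omega) (by omega)
    have key : 2 * len ≤ B - A := by
      rcases le_total a0 a1 with hle | hle
      · have hsep : a0 + len ≤ a1 := by
          by_contra hcon
          push_neg at hcon
          have ht0 : (a1 + (a0 + len)) / 2 ∈ Set.Ioo a0 (a0 + len) :=
            ⟨by linarith, by linarith⟩
          have ht1 : (a1 + (a0 + len)) / 2 ∈ Set.Ioo a1 (a1 + len) :=
            ⟨by linarith, by linarith⟩
          exact Set.disjoint_left.mp hd ht0 ht1
        linarith [hb0.1, hb1.2]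
      · have hsep : a1 + len ≤ a0 := by
          by_contra hcon
          push_neg at hcon
          have ht0 : (a0 + (a1 + len)) / 2 ∈ Set.Ioo a0 (a0 + len) :=
            ⟨by linarith, by linarith⟩
          have ht1 : (a0 + (a1 + len)) / 2 ∈ Set.Ioo a1 (a1 + len) :=
            ⟨by linarith, by linarith⟩
          exact Set.disjoint_left.mp hd ht0 ht1
        linarith [hb1.1, hb0.2]
    have hlength : (ρ ++ [k]).length = ρ.length + 1 := by simp
    rw [hlength, pow_succ]
    have hba : b - a = len := by linarith
    linarith [hb0.1, hb1.1, hb0.2, hb1.2]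

/-- Descent lemma: starting from a valid interval and a target subinterval, one can
descend `m` levels keeping a nonempty open subinterval of the target inside. -/
lemma descend (I : List ℕ → Set ℝ)
    (hint : ∀ ρ, ∃ a b : ℝ, a < b ∧ I ρ = Set.Ioo a b ∧ I ρ ⊆ Set.Ioo 0 1)
    (hfin : ∀ ρ : List ℕ,
      (I ρ \ ⋃ k ∈ Finset.range (2 ^ 2 ^ ρ.length), I (ρ ++ [k])).Finite) :
    ∀ (m : ℕ) (ρ : List ℕ) (a b c d : ℝ), ValidL ρ → I ρ = Set.Ioo a b →
      a ≤ c → d ≤ b → c < d →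
      ∃ (σ : List ℕ) (a' b' c' d' : ℝ), ValidL σ ∧ σ.length = ρ.length + m ∧
        I σ = Set.Ioo a' b' ∧ a' ≤ c' ∧ d' ≤ b' ∧ c ≤ c' ∧ d' ≤ d ∧ c' < d' := by
  intro m
  induction m with
  | zero =>
    intro ρ a b c d hv hI hac hdb hcd
    exact ⟨ρ, a, b, c, d, hv, rfl, hI, hac, hdb, le_refl _, le_refl _, hcd⟩
  | succ m IH =>
    intro ρ a b c d hv hI hac hdb hcd
    obtain ⟨σ, a', b', c', d', hvσ, hlenσ, hIσ, hac', hdb', hcc', hdd', hcd'⟩ :=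
      IH ρ a b c d hv hI hac hdb hcd
    -- pick a point of Ioo c' d' not in the exceptional finite set
    obtain ⟨y, hy⟩ := ((Set.Ioo_infinite hcd').diff (hfin σ)).nonempty
    have hyI : y ∈ I σ := by
      rw [hIσ]; exact ⟨lt_of_le_of_lt hac' hy.1.1, lt_of_lt_of_le hy.1.2 hdb'⟩
    have hyU : y ∈ ⋃ k ∈ Finset.range (2 ^ 2 ^ σ.length), I (σ ++ [k]) := by
      by_contra hcon
      exact hy.2 ⟨hyI, hcon⟩
    simp only [Set.mem_iUnion, Finset.mem_range, exists_prop] at hyU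
    obtain ⟨k, hk, hyk⟩ := hyU
    obtain ⟨a0, b0, hab0, heq0, _⟩ := hint (σ ++ [k])
    rw [heq0] at hyk
    refine ⟨σ ++ [k], a0, b0, max a0 c', min b0 d',
      ValidL.snoc hvσ hk,
      by simp only [List.length_append, List.length_cons, List.length_nil, hlenσ]; omega,
      heq0,
      le_max_left _ _, min_le_left _ _,
      le_trans hcc' (le_max_right _ _),
      le_trans (min_le_right _ _) hdd', ?_⟩
    exact max_lt (lt_min (hyk.1.trans hyk.2) (hyk.1.trans hy.1.2))
      (lt_min (hy.1.1.trans hyk.2) hcd')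

/-- Main construction: inside any open subinterval of `(0,1)` one can find a valid
interval `I ρ` at any depth `> n` with closure inside the target. -/
lemma find_interval (I : List ℕ → Set ℝ)
    (h0 : I [] = Set.Ioo 0 1)
    (hint : ∀ ρ, ∃ a b : ℝ, a < b ∧ I ρ = Set.Ioo a b ∧ I ρ ⊆ Set.Ioo 0 1)
    (hnest : ∀ (ρ : List ℕ) (k : ℕ), I (ρ ++ [k]) ⊆ I ρ)
    (hdisj : ∀ ρ : List ℕ, ∀ k < 2 ^ 2 ^ ρ.length, ∀ l < 2 ^ 2 ^ ρ.length, k ≠ l →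
      Disjoint (I (ρ ++ [k])) (I (ρ ++ [l])))
    (heq : ∀ ρ : List ℕ, ∃ len : ℝ, ∀ k < 2 ^ 2 ^ ρ.length,
      ∃ a : ℝ, I (ρ ++ [k]) = Set.Ioo a (a + len))
    (hfin : ∀ ρ : List ℕ,
      (I ρ \ ⋃ k ∈ Finset.range (2 ^ 2 ^ ρ.length), I (ρ ++ [k])).Finite)
    (C D : ℝ) (hCD : C < D) (hC : 0 ≤ C) (hD : D ≤ 1) (n : ℕ) :
    ∃ (ρ : List ℕ) (a b : ℝ), n < ρ.length ∧ a < b ∧ I ρ = Set.Ioo a b ∧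
      C < a ∧ b < D := by
  obtain ⟨N, hN⟩ := exists_pow_lt_of_lt_one (show (0:ℝ) < (D - C)/3 by linarith)
    (show (1/2 : ℝ) < 1 by norm_num)
  set m := max N (n + 1) with hm
  have hmN : (1/2 : ℝ) ^ m ≤ (1/2 : ℝ) ^ N :=
    pow_le_pow_of_le_one (by norm_num) (by norm_num) (le_max_left _ _)
  have hmsmall : (1/2 : ℝ) ^ m < (D - C)/3 := lt_of_le_of_lt hmN hN
  have hmn : n < m := lt_of_lt_of_le (Nat.lt_succ_self n) (le_max_right _ _)
  obtain ⟨σ, a', b', c', d', hvσ, hlenσ, hIσ, hac', hdb', hcc', hdd', hcd'⟩ :=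
    descend I hint hfin m [] 0 1 ((2*C + D)/3) ((C + 2*D)/3) ValidL.nil h0
      (by linarith) (by linarith) (by linarith)
  simp only [List.length_nil, Nat.zero_add] at hlenσ
  have hab' : a' < b' := lt_of_le_of_lt hac' (lt_of_lt_of_le hcd' hdb')
  have hdiam : b' - a' ≤ (1/2 : ℝ) ^ m := by
    have := diam_le I h0 hint hnest hdisj heq σ hvσ a' b' hab' hIσ
    rwa [hlenσ] at this
  refine ⟨σ, a', b', by omega, hab', hIσ, ?_, ?_⟩
  · -- C < a' : use y = (c'+d')/2 ∈ Ioo a' b', y > (2C+D)/3, diam < (D-C)/3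
    nlinarith [hcd', hcc', hdd', hac', hdb', hdiam, hmsmall]
  · nlinarith [hcd', hcc', hdd', hac', hdb', hdiam, hmsmall]

/-- Every open set in the box topology is a union of open boxes. -/
lemma box_basis {ι : Type} {G : Set (ι → Set.Icc (0:ℝ) 1)}
    (hG : @IsOpen _ (boxTopology ι) G) :
    ∀ x ∈ G, ∃ U : ι → Set (Set.Icc (0:ℝ) 1), (∀ i, IsOpen (U i)) ∧
      x ∈ Set.pi Set.univ U ∧ Set.pi Set.univ U ⊆ G := by
  have hG' : TopologicalSpace.GenerateOpen
      {S | ∃ U : ι → Set (Set.Icc (0:ℝ) 1), (∀ i, IsOpen (U i)) ∧ S = Set.pi Set.univ U}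
      G := hG
  clear hG
  induction hG' with
  | basic s hs =>
    intro x hx
    obtain ⟨U, hU, rfl⟩ := hs
    exact ⟨U, hU, hx, subset_rfl⟩
  | univ =>
    intro x _
    exact ⟨fun _ => Set.univ, fun _ => isOpen_univ, by simp, by simp⟩
  | inter s t _ _ ihs iht =>
    intro x hx
    obtain ⟨U, hU, hxU, hUs⟩ := ihs x hx.1
    obtain ⟨V, hV, hxV, hVt⟩ := iht x hx.2
    refine ⟨fun i => U i ∩ V i, fun i => (hU i).inter (hV i), ?_, ?_⟩
    · exact fun i _ => ⟨hxU i (Set.mem_univ i), hxV i (Set.mem_univ i)⟩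
    · intro z hz
      exact ⟨hUs fun i hi => (hz i hi).1, hVt fun i hi => (hz i hi).2⟩
  | sUnion S _ ih =>
    intro x hx
    obtain ⟨s, hsS, hxs⟩ := hx
    obtain ⟨U, hU, hxU, hUs⟩ := ih s hsS x hxs
    exact ⟨U, hU, hxU, hUs.trans (Set.subset_sUnion_of_mem hsS)⟩

/-- Given the canonical family `I ρ` of nested rational-style intervals, a dense open
set `G` in the box topology, a nonempty open box `B`, and `n < ω`, there is an open
box whose sides are intervals `I ρ` with `length ρ > n`, with closures inside the
sides of `B`, and which is contained in `G`. -/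
theorem stmt9 {ι : Type} (I : List ℕ → Set ℝ)
    (h0 : I [] = Set.Ioo 0 1)
    (hint : ∀ ρ, ∃ a b : ℝ, a < b ∧ I ρ = Set.Ioo a b ∧ I ρ ⊆ Set.Ioo 0 1)
    (hnest : ∀ (ρ : List ℕ) (k : ℕ), I (ρ ++ [k]) ⊆ I ρ)
    (hdisj : ∀ ρ : List ℕ, ∀ k < 2 ^ 2 ^ ρ.length, ∀ l < 2 ^ 2 ^ ρ.length, k ≠ l →
      Disjoint (I (ρ ++ [k])) (I (ρ ++ [l])))
    (heq : ∀ ρ : List ℕ, ∃ len : ℝ, ∀ k < 2 ^ 2 ^ ρ.length,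
      ∃ a : ℝ, I (ρ ++ [k]) = Set.Ioo a (a + len))
    (hfin : ∀ ρ : List ℕ,
      (I ρ \ ⋃ k ∈ Finset.range (2 ^ 2 ^ ρ.length), I (ρ ++ [k])).Finite)
    (G : Set (ι → Set.Icc (0:ℝ) 1))
    (hGo : @IsOpen _ (boxTopology ι) G) (hGd : @Dense _ (boxTopology ι) G)
    (B : ι → Set ℝ)
    (hB : ∀ i, ∃ a b : ℝ, a < b ∧ 0 ≤ a ∧ b ≤ 1 ∧ B i = Set.Ioo a b)
    (n : ℕ) :
    ∃ ρs : ι → List ℕ, (∀ i, n < (ρs i).length) ∧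
      (∀ i, closure (I (ρs i)) ⊆ B i) ∧
      {x : ι → Set.Icc (0:ℝ) 1 | ∀ i, (x i : ℝ) ∈ I (ρs i)} ⊆ G := by
  classical
  choose α β hαβ hα0 hβ1 hBe using hB
  -- the open box corresponding to B
  set B' : Set (ι → Set.Icc (0:ℝ) 1) :=
    Set.pi Set.univ (fun i => (Subtype.val ⁻¹' B i : Set (Set.Icc (0:ℝ) 1))) with hB'
  have hB'open : @IsOpen _ (boxTopology ι) B' := by
    apply TopologicalSpace.GenerateOpen.basic
    refine ⟨fun i => Subtype.val ⁻¹' B i, fun i => ?_, rfl⟩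
    have : IsOpen (B i) := by rw [hBe i]; exact isOpen_Ioo
    exact this.preimage continuous_subtype_val
  have hB'ne : B'.Nonempty := by
    refine ⟨fun i => ⟨(α i + β i)/2, Set.mem_Icc.mpr
      ⟨by linarith [hαβ i, hα0 i], by linarith [hαβ i, hβ1 i]⟩⟩, ?_⟩
    intro i _
    show ((α i + β i)/2 : ℝ) ∈ B i
    rw [hBe i]
    exact ⟨by linarith [hαβ i], by linarith [hαβ i]⟩
  have hmeet := (@dense_iff_inter_open _ (boxTopology ι) G).mp hGd B' hB'open hB'ne
  obtain ⟨x, hxB', hxG⟩ := hmeet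
  obtain ⟨U, hUopen, hxU, hUG⟩ := box_basis hGo x hxG
  have key : ∀ i, ∃ ρ : List ℕ, n < ρ.length ∧ closure (I ρ) ⊆ B i ∧
      ∀ t : Set.Icc (0:ℝ) 1, (t : ℝ) ∈ I ρ → t ∈ U i := by
    intro i
    obtain ⟨V, hVopen, hVeq⟩ := isOpen_induced_iff.mp (hUopen i)
    have hxiU : x i ∈ U i := hxU i (Set.mem_univ i)
    have hxiV : (x i : ℝ) ∈ V := by rw [← hVeq] at hxiU; exact hxiU
    have hxiB : (x i : ℝ) ∈ Set.Ioo (α i) (β i) := by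
      have h : (x i : ℝ) ∈ B i := hxB' i (Set.mem_univ i)
      rwa [hBe i] at h
    obtain ⟨ε, hεpos, hball⟩ := Metric.isOpen_iff.mp hVopen _ hxiV
    set C : ℝ := max ((x i : ℝ) - ε) (α i) with hC
    set D : ℝ := min ((x i : ℝ) + ε) (β i) with hD
    have hCx : C < (x i : ℝ) := max_lt (by linarith) hxiB.1
    have hxD : (x i : ℝ) < D := lt_min (by linarith) hxiB.2
    have hCD : C < D := hCx.trans hxD
    have hC0 : 0 ≤ C := le_trans (hα0 i) (le_max_right _ _)
    have hD1 : D ≤ 1 := le_trans (min_le_right _ _) (hβ1 i)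
    have hsubV : Set.Ioo C D ⊆ V := by
      intro z hz
      apply hball
      rw [Real.ball_eq_Ioo]
      exact ⟨lt_of_le_of_lt (le_max_left _ _) hz.1, lt_of_lt_of_le hz.2 (min_le_left _ _)⟩
    have hsubB : Set.Ioo C D ⊆ B i := by
      rw [hBe i]
      exact Set.Ioo_subset_Ioo (le_max_right _ _) (min_le_right _ _)
    obtain ⟨ρ, a, b, hlen, hab, hIρ, hCa, hbD⟩ :=
      find_interval I h0 hint hnest hdisj heq hfin C D hCD hC0 hD1 n
    refine ⟨ρ, hlen, ?_, ?_⟩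
    · rw [hIρ, closure_Ioo (ne_of_lt hab)]
      intro z hz
      exact hsubB ⟨lt_of_lt_of_le hCa hz.1, lt_of_le_of_lt hz.2 hbD⟩
    · intro t ht
      rw [hIρ] at ht
      have : (t : ℝ) ∈ V := hsubV ⟨hCa.trans ht.1, ht.2.trans hbD⟩
      rw [← hVeq]
      exact this
  choose ρs hρ1 hρ2 hρ3 using key
  refine ⟨ρs, hρ1, hρ2, ?_⟩
  intro z hz
  apply hUG
  intro i _
  exact hρ3 i (z i) (hz i)
end
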